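/- arXiv:math/0510465 — 6 statements merged into one kernel-verified Lean document; each statement's English description precedes it below -/
import Mathlib

section
/- Let A and B be finitely generated nilpotent groups, C_A a proper subgroup of A and C_B a proper subgroup of B, and let G = {A * B; C_A = C_B} be their amalgamated free product identifying C_A with C_B via an isomorphism. Then G is not perfect, i.e. [G,G] ≠ G. -/
open Monoid Function

universe u

/-- The family of two groups indexed by `Bool`, used to form the amalgamated
free product `A *_C B` as a `Monoid.PushoutI`. -/
def twoFam (A B : Type u) : Bool → Type u := fun b => bif b then A else B

instance twoFamGroup {A B : Type u} [Group A] [Group B] : ∀ b, Group (twoFam A B b)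
  | true => ‹Group A›
  | false => ‹Group B›

/-- The pair of monomorphisms `α : C →* A`, `β : C →* B` as a family over `Bool`. -/
def twoPhi {A B : Type u} {C : Type*} [Group A] [Group B] [Group C]
    (α : C →* A) (β : C →* B) : ∀ b, C →* twoFam A B b
  | true => α
  | false => β

open scoped commutatorElement

lemma commutator_center_left {G : Type*} [Group G] (a b z : G)
    (hz : z ∈ Subgroup.center G) : ⁅a * z, b⁆ = ⁅a, b⁆ := by
  have h : z * b = b * z := (Subgroup.mem_center_iff.mp hz b).symm
  simp only [commutatorElement_def]
  rw [mul_assoc a z b, h, ← mul_assoc]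
  group

lemma commutator_center_right {G : Type*} [Group G] (a b z : G)
    (hz : z ∈ Subgroup.center G) : ⁅a, b * z⁆ = ⁅a, b⁆ := by
  have h : z * a⁻¹ = a⁻¹ * z := (Subgroup.mem_center_iff.mp hz a⁻¹).symm
  simp only [commutatorElement_def, mul_inv_rev]
  rw [← mul_assoc a b z, mul_assoc (a * b) z a⁻¹, h, ← mul_assoc]
  group

lemma key_nongen (G : Type) [Group G] [Group.IsNilpotent G] :
    ∀ H : Subgroup G, H ⊔ commutator G = ⊤ → H = ⊤ := by
  refine nilpotent_center_quotient_ind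
    (P := fun G _ _ => ∀ H : Subgroup G, H ⊔ commutator G = ⊤ → H = ⊤) G
    (fun G _ _ H _ => Subsingleton.elim H ⊤) ?_
  intro G _ _ ih H hH
  set Z := Subgroup.center G
  have hsurj : Function.Surjective (QuotientGroup.mk' Z) := QuotientGroup.mk'_surjective Z
  have hmap : Subgroup.map (QuotientGroup.mk' Z) H ⊔ commutator (G ⧸ Z) = ⊤ := by
    have h0 : Subgroup.map (QuotientGroup.mk' Z) (H ⊔ commutator G) = ⊤ := by
      rw [hH]; exact Subgroup.map_top_of_surjective _ hsurj
    rwa [Subgroup.map_sup, commutator_def, Subgroup.map_commutator,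
      Subgroup.map_top_of_surjective _ hsurj, ← commutator_def] at h0
  have hHZ : H ⊔ Z = ⊤ := by
    have h1 := ih (Subgroup.map (QuotientGroup.mk' Z) H) hmap
    have h2 := congrArg (Subgroup.comap (QuotientGroup.mk' Z)) h1
    rwa [Subgroup.comap_map_eq, QuotientGroup.ker_mk', Subgroup.comap_top] at h2
  have hcomm : commutator G ≤ H := by
    rw [commutator_def, Subgroup.commutator_le]
    intro g₁ hg₁ g₂ hg₂
    have m1 : g₁ ∈ (↑(H ⊔ Z) : Set G) := by rw [hHZ]; trivial
    have m2 : g₂ ∈ (↑(H ⊔ Z) : Set G) := by rw [hHZ]; trivial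
    rw [Subgroup.mul_normal] at m1 m2
    obtain ⟨h₁, hh₁, z₁, hz₁, rfl⟩ := m1
    obtain ⟨h₂, hh₂, z₂, hz₂, rfl⟩ := m2
    rw [commutator_center_left _ _ _ hz₁, commutator_center_right _ _ _ hz₂,
      commutatorElement_def]
    exact mul_mem (mul_mem (mul_mem hh₁ hh₂) (inv_mem hh₁)) (inv_mem hh₂)
  rw [← hH, sup_eq_left.mpr hcomm]

lemma abel_of_eq_one {G : Type*} [Group G] {x : G} (h : Abelianization.of x = 1) :
    x ∈ commutator G := (QuotientGroup.eq_one_iff x).mp h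

/-- The pair of maps as a family over `Bool`, to feed into `PushoutI.lift`. -/
def twoF {A B : Type u} {Q : Type*} [Group A] [Group B] [Group Q]
    (fA : A →* Q) (fB : B →* Q) : ∀ b, twoFam A B b →* Q
  | true => fA
  | false => fB

/-- Let `A`, `B` be finitely generated nilpotent groups, `C_A < A` and
`C_B < B` proper subgroups identified via an isomorphism `φ`, and let
`G = {A * B; C_A = C_B}` be the amalgamated free product. Then `G` is not perfect. -/
theorem amalgamated_product_of_fg_nilpotent_not_perfect
    {A B : Type} [Group A] [Group B] [Group.FG A] [Group.FG B]
    [Group.IsNilpotent A] [Group.IsNilpotent B]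
    (CA : Subgroup A) (CB : Subgroup B) (hCA : CA ≠ ⊤) (hCB : CB ≠ ⊤)
    (φ : CA ≃* CB) :
    commutator (PushoutI (twoPhi CA.subtype (CB.subtype.comp φ.toMonoidHom))) ≠ ⊤ := by
  intro htop
  set ψ : CA →* Abelianization A × Abelianization B := MonoidHom.mk'
    (fun c => (Abelianization.of (c : A), (Abelianization.of ((φ c : CB) : B))⁻¹))
    (by
      intro a b
      ext
      · simp [Prod.fst_mul]
      · simp [Prod.snd_mul, mul_comm]) with hψ
  set N : Subgroup (Abelianization A × Abelianization B) := ψ.range with hN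
  set fA : A →* (Abelianization A × Abelianization B) ⧸ N := (QuotientGroup.mk' N).comp
    ((MonoidHom.inl (Abelianization A) (Abelianization B)).comp Abelianization.of) with hfA
  set fB : B →* (Abelianization A × Abelianization B) ⧸ N := (QuotientGroup.mk' N).comp
    ((MonoidHom.inr (Abelianization A) (Abelianization B)).comp Abelianization.of) with hfB
  set k : CA →* (Abelianization A × Abelianization B) ⧸ N := fA.comp CA.subtype with hk
  have hf : ∀ b, (twoF fA fB b).comp (twoPhi CA.subtype (CB.subtype.comp φ.toMonoidHom) b) = k := by
    intro b
    cases b with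
    | true => rfl
    | false =>
      ext c
      show fB ((φ c : CB) : B) = fA ((c : CA) : A)
      simp only [hfA, hfB, MonoidHom.comp_apply, MonoidHom.inl_apply, MonoidHom.inr_apply]
      rw [QuotientGroup.mk'_eq_mk']
      refine ⟨ψ c, ⟨c, rfl⟩, ?_⟩
      ext
      · simp [hψ, Prod.fst_mul]
      · simp [hψ, Prod.snd_mul]
  set F := PushoutI.lift _ k hf with hF
  have hker : ∀ x, F x = 1 := by
    intro x
    have : commutator _ ≤ F.ker := Abelianization.commutator_subset_ker F
    rw [htop] at this
    exact this (Subgroup.mem_top x)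
  have hsup : CA ⊔ commutator A = ⊤ := by
    rw [Subgroup.eq_top_iff']
    intro a
    have h1 : fA a = 1 := by
      have := hker (PushoutI.of (φ := twoPhi CA.subtype (CB.subtype.comp φ.toMonoidHom)) true a)
      rw [hF] at this
      exact (PushoutI.lift_of (twoF fA fB) k hf (i := true) a).symm.trans this
    have h2 : ((Abelianization.of a, 1) : Abelianization A × Abelianization B) ∈ N := by
      rw [← QuotientGroup.eq_one_iff]
      exact h1
    obtain ⟨c, hc⟩ := h2
    have hc1 : Abelianization.of (c : A) = Abelianization.of a := congrArg Prod.fst hc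
    have h3 : (c : A)⁻¹ * a ∈ commutator A := by
      apply abel_of_eq_one
      rw [map_mul, map_inv, hc1]
      group
    have : a = (c : A) * ((c : A)⁻¹ * a) := by group
    rw [this]
    exact mul_mem (Subgroup.mem_sup_left c.2) (Subgroup.mem_sup_right h3)
  exact hCA (key_nongen A CA hsup)
end

section
/- If A is a finitely generated nilpotent group and C is a proper subgroup of A, then the quotient of the abelianization A_ab by the image of C is a nontrivial group. -/
open Subgroup
open scoped commutatorElement

/-- In any group, if `H ⊔ γ_{n+1} = ⊤` then `commutator G ≤ H ⊔ γ_{n+2}`. -/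
private lemma commutator_le_sup_succ {G : Type*} [Group G] (H : Subgroup G) (n : ℕ)
    (h : H ⊔ Subgroup.lowerCentralSeries (⊤ : Subgroup G) (n + 1) = ⊤) :
    commutator G ≤ H ⊔ Subgroup.lowerCentralSeries (⊤ : Subgroup G) (n + 2) := by
  set N := Subgroup.lowerCentralSeries (⊤ : Subgroup G) (n + 1) with hN
  set M := Subgroup.lowerCentralSeries (⊤ : Subgroup G) (n + 2) with hM
  have hMnormal : M.Normal := Subgroup.lowerCentralSeries_normal ⊤ (n + 2)
  have hMle : M ≤ H ⊔ M := le_sup_right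
  have hcomm : ∀ z ∈ N, ∀ g : G, ⁅z, g⁆ ∈ M := by
    intro z hz g
    exact commutator_mem_commutator hz (mem_top g)
  -- key: for any a b in H ⊔ N, ⁅a,b⁆ ∈ H ⊔ M
  have key : ∀ h₁ ∈ H, ∀ z₁ ∈ N, ∀ h₂ ∈ H, ∀ z₂ ∈ N,
      ⁅h₁ * z₁, h₂ * z₂⁆ ∈ H ⊔ M := by
    intro h₁ hh₁ z₁ hz₁ h₂ hh₂ z₂ hz₂
    have e1 : ⁅h₁ * z₁, h₂ * z₂⁆ =
        (h₁ * ⁅z₁, h₂ * z₂⁆ * h₁⁻¹) * ⁅h₁, h₂ * z₂⁆ := by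
      simp only [commutatorElement_def]; group
    have m1 : h₁ * ⁅z₁, h₂ * z₂⁆ * h₁⁻¹ ∈ M :=
      hMnormal.conj_mem _ (hcomm z₁ hz₁ _) h₁
    have e2 : ⁅h₁, h₂ * z₂⁆ = ⁅h₁, h₂⁆ * (h₂ * ⁅h₁, z₂⁆ * h₂⁻¹) := by
      simp only [commutatorElement_def]; group
    have m2 : ⁅h₁, z₂⁆ ∈ M := by
      have h' : ⁅z₂, h₁⁆⁻¹ ∈ M := M.inv_mem (hcomm z₂ hz₂ h₁)
      rwa [commutatorElement_inv] at h'
    have m2' : h₂ * ⁅h₁, z₂⁆ * h₂⁻¹ ∈ M := hMnormal.conj_mem _ m2 h₂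
    have mH : ⁅h₁, h₂⁆ ∈ H := by
      rw [commutatorElement_def]
      exact H.mul_mem (H.mul_mem (H.mul_mem hh₁ hh₂) (H.inv_mem hh₁)) (H.inv_mem hh₂)
    rw [e1, e2]
    exact mul_mem (mem_sup_right m1)
      (mul_mem (mem_sup_left mH) (mem_sup_right m2'))
  rw [_root_.commutator_def, Subgroup.commutator_le]
  intro g₁ _ g₂ _
  have hg₁ : g₁ ∈ H ⊔ N := h ▸ mem_top g₁
  have hg₂ : g₂ ∈ H ⊔ N := h ▸ mem_top g₂
  have hNnormal : N.Normal := Subgroup.lowerCentralSeries_normal ⊤ (n + 1)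
  rw [← SetLike.mem_coe, Subgroup.mul_normal H N] at hg₁ hg₂
  obtain ⟨h₁, hh₁, z₁, hz₁, rfl⟩ := hg₁
  obtain ⟨h₂, hh₂, z₂, hz₂, rfl⟩ := hg₂
  exact key h₁ hh₁ z₁ hz₁ h₂ hh₂ z₂ hz₂

/-- In a nilpotent group, a subgroup together with the commutator subgroup
generates the whole group only if the subgroup is already everything. -/
private lemma eq_top_of_sup_commutator {G : Type*} [Group G] [Group.IsNilpotent G]
    (H : Subgroup G) (h : H ⊔ commutator G = ⊤) : H = ⊤ := by
  have claim : ∀ n, H ⊔ Subgroup.lowerCentralSeries (⊤ : Subgroup G) (n + 1) = ⊤ := by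
    intro n
    induction n with
    | zero => simpa [Subgroup.top_lowerCentralSeries_one, _root_.commutator_def] using h
    | succ n ih =>
      have := commutator_le_sup_succ H n ih
      have h2 : H ⊔ commutator G ≤ H ⊔ Subgroup.lowerCentralSeries (⊤ : Subgroup G) (n + 2) :=
        sup_le le_sup_left this
      rw [h] at h2
      exact top_le_iff.mp h2
  obtain ⟨n, hn⟩ := Subgroup.nilpotent_iff_lowerCentralSeries.mp ‹Group.IsNilpotent G›
  have hbot : Subgroup.lowerCentralSeries (⊤ : Subgroup G) (n + 1) = ⊥ := by
    rw [eq_bot_iff, ← hn]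
    exact Subgroup.lowerCentralSeries_antitone ⊤ (Nat.le_succ n)
  have := claim n
  rw [hbot, sup_bot_eq] at this
  exact this

private lemma ker_abelianization_of {G : Type*} [Group G] :
    (Abelianization.of : G →* Abelianization G).ker = commutator G := by
  ext x
  simp only [MonoidHom.mem_ker]
  exact QuotientGroup.eq_one_iff x

/-- If `A` is a finitely generated nilpotent group and `C` a proper
subgroup, then the quotient of the abelianization of `A` by the image of `C` is
nontrivial. -/
theorem abelianization_quotient_image_nontrivial {A : Type*} [Group A] [Group.FG A]
    [Group.IsNilpotent A] (C : Subgroup A) (hC : C ≠ ⊤) :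
    Nontrivial (Abelianization A ⧸ C.map Abelianization.of) := by
  by_contra hnt
  rw [not_nontrivial_iff_subsingleton] at hnt
  have htop : C.map Abelianization.of = ⊤ :=
    QuotientGroup.subgroup_eq_top_of_subsingleton _ hnt
  apply hC
  have hsurj : Function.Surjective (Abelianization.of : A →* Abelianization A) :=
    Quotient.mk_surjective
  have : Subgroup.comap Abelianization.of (C.map Abelianization.of) = ⊤ := by
    rw [htop, Subgroup.comap_top]
  rw [Subgroup.comap_map_eq, ker_abelianization_of] at this
  exact eq_top_of_sup_commutator C this
end

section
/- Every nontrivial finitely generated torsion-free nilpotent group admits a surjective homomorphism onto the integers (i.e. is indicable). -/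
open scoped commutatorElement

/-- Old Mathlib definition (removed since): a monoid is torsion-free if no element other
than `1` has finite order. -/
def Monoid.IsTorsionFree (G : Type*) [Monoid G] : Prop :=
  ∀ g : G, g ≠ 1 → ¬IsOfFinOrder g

/-! Auxiliary lemmas -/

/-- Power of a central commutator: `⁅x^k, y⁆ = ⁅x, y⁆^k` when `⁅x,y⁆` is central. -/
private lemma comm_pow_aux {G : Type*} [Group G] (x y : G)
    (h : ⁅x, y⁆ ∈ Subgroup.center G) (k : ℕ) : ⁅x ^ k, y⁆ = ⁅x, y⁆ ^ k := by
  induction k with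
  | zero => simp
  | succ m ih =>
    have hc : ∀ a : G, a * ⁅x, y⁆ = ⁅x, y⁆ * a := fun a =>
      (Subgroup.mem_center_iff.mp h a)
    have hxy : x * y = ⁅x, y⁆ * (y * x) := by
      rw [commutatorElement_def]; group
    have hconj : x ^ m * ⁅x, y⁆ * (x ^ m)⁻¹ = ⁅x, y⁆ := by
      rw [hc (x ^ m)]; group
    calc ⁅x ^ (m + 1), y⁆
        = x ^ m * (x * y) * x⁻¹ * (x ^ m)⁻¹ * y⁻¹ := by
          rw [commutatorElement_def]; group
      _ = x ^ m * (⁅x, y⁆ * (y * x)) * x⁻¹ * (x ^ m)⁻¹ * y⁻¹ := by rw [hxy]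
      _ = (x ^ m * ⁅x, y⁆ * (x ^ m)⁻¹) * (x ^ m * y * (x ^ m)⁻¹ * y⁻¹) := by group
      _ = ⁅x, y⁆ * ⁅x ^ m, y⁆ := by rw [hconj, commutatorElement_def (x ^ m) y]
      _ = ⁅x, y⁆ * ⁅x, y⁆ ^ m := by rw [ih]
      _ = ⁅x, y⁆ ^ (m + 1) := (pow_succ' _ _).symm

/-- The subgroup of central torsion elements. -/
private def centralTorsion (G : Type*) [Group G] : Subgroup G where
  carrier := {g | g ∈ Subgroup.center G ∧ IsOfFinOrder g}
  one_mem' := ⟨Subgroup.one_mem _, IsOfFinOrder.one⟩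
  mul_mem' := by
    rintro a b ⟨ha, hao⟩ ⟨hb, hbo⟩
    refine ⟨Subgroup.mul_mem _ ha hb, ?_⟩
    have hcomm : Commute a b := (Subgroup.mem_center_iff.mp ha b).symm
    exact hcomm.isOfFinOrder_mul hao hbo
  inv_mem' := by
    rintro a ⟨ha, hao⟩
    exact ⟨Subgroup.inv_mem _ ha, hao.inv⟩

/-- For a surjective homomorphism, the lower central series of the target is contained in the
image of the lower central series of the source. -/
private lemma lcs_le_map {G H : Type*} [Group G] [Group H] (f : G →* H)
    (hf : Function.Surjective f) (n : ℕ) :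
    Subgroup.lowerCentralSeries (⊤ : Subgroup H) n ≤ Subgroup.map f (Subgroup.lowerCentralSeries (⊤ : Subgroup G) n) := by
  induction n with
  | zero =>
    rw [lowerCentralSeries_zero, lowerCentralSeries_zero,
      Subgroup.map_top_of_surjective f hf]
  | succ m ih =>
    show ⁅Subgroup.lowerCentralSeries (⊤ : Subgroup H) m, (⊤ : Subgroup H)⁆ ≤
      Subgroup.map f (Subgroup.lowerCentralSeries (⊤ : Subgroup G) (m + 1))
    have : Subgroup.map f (Subgroup.lowerCentralSeries (⊤ : Subgroup G) (m + 1)) =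
        ⁅Subgroup.map f (Subgroup.lowerCentralSeries (⊤ : Subgroup G) m), Subgroup.map f (⊤ : Subgroup G)⁆ :=
      Subgroup.map_commutator _ _ _
    rw [this]
    exact Subgroup.commutator_mono ih
      (by rw [Subgroup.map_top_of_surjective f hf])

/-- A nilpotent group with torsion abelianization is torsion. -/
private lemma nilpotent_torsion_abelianization {u : ℕ} :
    ∀ (G : Type*) [Group G] [inst : Group.IsNilpotent G],
      Group.nilpotencyClass G ≤ u → Monoid.IsTorsion (Abelianization G) →
      Monoid.IsTorsion G := by
  induction u with
  | zero =>
    intro G _ _ hcl _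
    have : Subsingleton G :=
      nilpotencyClass_zero_iff_subsingleton.mp (Nat.le_zero.mp hcl)
    intro g
    rw [Subsingleton.elim g 1]
    exact IsOfFinOrder.one
  | succ n IH =>
    intro G _ _ hcl htor
    cases n with
    | zero =>
      -- class ≤ 1 : G is abelian, `Abelianization.of` is injective
      have hbot : commutator G = ⊥ := by
        have := lowerCentralSeries_eq_bot_iff_nilpotencyClass_le.mpr hcl
        rwa [lowerCentralSeries_one] at this
      intro g
      obtain ⟨k, hk, hgk⟩ := (htor (Abelianization.of g)).exists_pow_eq_one
      have : Abelianization.of (g ^ k) = 1 := by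
        rw [map_pow]; exact hgk
      have hker : g ^ k ∈ commutator G := (QuotientGroup.eq_one_iff _).mp this
      rw [hbot, Subgroup.mem_bot] at hker
      exact isOfFinOrder_iff_pow_eq_one.mpr ⟨k, hk, hker⟩
    | succ m =>
      set N : Subgroup G := Subgroup.lowerCentralSeries (⊤ : Subgroup G) (m + 1) with hN
      have hγbot : Subgroup.lowerCentralSeries (⊤ : Subgroup G) (m + 2) = ⊥ :=
        lowerCentralSeries_eq_bot_iff_nilpotencyClass_le.mpr hcl
      have hNcentral : N ≤ Subgroup.center G := by
        intro x hx
        rw [Subgroup.mem_center_iff]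
        intro g
        have hcomm : ⁅x, g⁆ = 1 := by
          have : ⁅x, g⁆ ∈ Subgroup.lowerCentralSeries (⊤ : Subgroup G) (m + 2) :=
            Subgroup.commutator_mem_commutator hx (Subgroup.mem_top g)
          rwa [hγbot, Subgroup.mem_bot] at this
        exact (commutatorElement_eq_one_iff_commute.mp hcomm).symm
      haveI : N.Normal := by rw [hN]; infer_instance
      set f : G →* G ⧸ N := QuotientGroup.mk' N with hf
      have hfsurj : Function.Surjective f := QuotientGroup.mk'_surjective N
      -- the quotient has smaller nilpotency class
      have hclQ : Group.nilpotencyClass (G ⧸ N) ≤ m + 1 := by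
        rw [← lowerCentralSeries_eq_bot_iff_nilpotencyClass_le]
        rw [eq_bot_iff]
        refine le_trans (lcs_le_map f hfsurj (m + 1)) ?_
        rw [le_bot_iff, Subgroup.map_eq_bot_iff, hf, QuotientGroup.ker_mk']
      -- abelianization of the quotient is torsion
      have htorQ : Monoid.IsTorsion (Abelianization (G ⧸ N)) := by
        have hsurj : Function.Surjective (Abelianization.map f) := by
          intro b
          refine QuotientGroup.induction_on b ?_
          intro q
          obtain ⟨g, rfl⟩ := hfsurj q
          exact ⟨Abelianization.of g, Abelianization.map_of f g⟩
        exact IsTorsion.of_surjective hsurj htor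
      have htorQ' : Monoid.IsTorsion (G ⧸ N) := IH (G ⧸ N) hclQ htorQ
      -- N is torsion
      have hNtor : ∀ x ∈ N, IsOfFinOrder x := by
        have hle : N ≤ centralTorsion G := by
          rw [hN]
          show ⁅Subgroup.lowerCentralSeries (⊤ : Subgroup G) m, (⊤ : Subgroup G)⁆ ≤ centralTorsion G
          rw [Subgroup.commutator_le]
          intro x hx y _
          have hzN : ⁅x, y⁆ ∈ N := by
            rw [hN]
            exact Subgroup.commutator_mem_commutator hx (Subgroup.mem_top y)
          have hzc : ⁅x, y⁆ ∈ Subgroup.center G := hNcentral hzN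
          obtain ⟨k, hk, hxk⟩ := (htorQ' (f x)).exists_pow_eq_one
          have hxkN : x ^ k ∈ N := by
            have : f (x ^ k) = 1 := by rw [map_pow]; exact hxk
            rwa [← QuotientGroup.ker_mk' N, MonoidHom.mem_ker]
          have hxkc : x ^ k ∈ Subgroup.center G := hNcentral hxkN
          have hzk : ⁅x, y⁆ ^ k = 1 := by
            rw [← comm_pow_aux x y hzc k]
            exact commutatorElement_eq_one_iff_commute.mpr
              ((Subgroup.mem_center_iff.mp hxkc y).symm)
          exact ⟨hzc, isOfFinOrder_iff_pow_eq_one.mpr ⟨k, hk, hzk⟩⟩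
        intro x hx
        exact (hle hx).2
      have htorN : Monoid.IsTorsion N := by
        rintro ⟨x, hx⟩
        rw [← Submonoid.isOfFinOrder_coe]
        exact hNtor x hx
      exact IsTorsion.extension_closed (QuotientGroup.ker_mk' N).symm htorQ' htorN

/-- Every nontrivial finitely generated torsion-free nilpotent group is
indicable, i.e. admits a surjective homomorphism onto the integers. -/
theorem fg_torsionFree_nilpotent_indicable {G : Type*} [Group G] [Group.FG G]
    [Group.IsNilpotent G] (htf : Monoid.IsTorsionFree G) (hG : Nontrivial G) :
    ∃ f : G →* Multiplicative ℤ, Function.Surjective f := by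
  classical
  -- the abelianization is not a torsion group
  have hA : ¬ Monoid.IsTorsion (Abelianization G) := by
    intro h
    obtain ⟨x, hx⟩ := exists_ne (1 : G)
    exact htf x hx
      (nilpotent_torsion_abelianization G (u := Group.nilpotencyClass G) le_rfl h x)
  have hofsurj : Function.Surjective (Abelianization.of (G := G)) := fun b =>
    QuotientGroup.induction_on b fun g => ⟨g, rfl⟩
  haveI : Group.FG (Abelianization G) := Group.fg_of_surjective hofsurj
  set A := Abelianization G with hAdef
  set T : Subgroup A := CommGroup.torsion A with hT
  haveI : T.Normal := inferInstance
  set B := A ⧸ T with hB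
  set π : A →* B := QuotientGroup.mk' T with hπ
  have hπsurj : Function.Surjective π := QuotientGroup.mk'_surjective T
  haveI : Group.FG B := inferInstance
  have hBtf : Monoid.IsTorsionFree B := fun b hb => not_isOfFinOrder_of_isMulTorsionFree hb
  -- B is nontrivial
  haveI hBnt : Nontrivial B := by
    by_contra hc
    rw [not_nontrivial_iff_subsingleton] at hc
    apply hA
    intro a
    have h1 : π a = 1 := Subsingleton.elim _ _
    have : a ∈ T := by
      rwa [← QuotientGroup.ker_mk' T, MonoidHom.mem_ker]
    exact (CommGroup.mem_torsion a).mp this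
  -- pass to the additive free ℤ-module
  haveI : Module.Finite ℤ (Additive B) := Module.Finite.iff_addGroup_fg.mpr inferInstance
  haveI haddtf : IsAddTorsionFree (Additive B) := inferInstance
  haveI : NoZeroSMulDivisors ℤ (Additive B) :=
    IsAddTorsionFree.to_noZeroSMulDivisors_int
  haveI : Module.Free ℤ (Additive B) := Module.free_of_finite_type_torsion_free'
  let b := Module.Free.chooseBasis ℤ (Additive B)
  haveI : Nontrivial (Additive B) := ‹Nontrivial B›
  obtain ⟨i⟩ := b.index_nonempty
  let φ : Additive B →ₗ[ℤ] ℤ := b.coord i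
  have hφsurj : Function.Surjective φ := fun n =>
    ⟨n • b i, by simp [φ, Module.Basis.coord_apply]⟩
  -- assemble the homomorphism
  let ψ : B →* Multiplicative ℤ :=
    { toFun := fun x => Multiplicative.ofAdd (φ (Additive.ofMul x))
      map_one' := by simp
      map_mul' := fun x y => by
        simp [ofMul_mul, map_add, ofAdd_add] }
  have hψsurj : Function.Surjective ψ := by
    intro n
    obtain ⟨m, hm⟩ := hφsurj (Multiplicative.toAdd n)
    exact ⟨Additive.toMul m, by simp [ψ, hm]⟩
  refine ⟨ψ.comp (π.comp Abelianization.of), ?_⟩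
  exact hψsurj.comp (hπsurj.comp hofsurj)
end

section
/- Let {A_i}_{i∈I} be an indexed family of groups, C a group with monomorphisms φ_i : C → A_i whose images are central in A_i, and let A be the generalized central product: the quotient of the (restricted) direct product ∏ A_i by the normal subgroup generated by the elements φ_i(c)·φ_j(c)⁻¹ for c ∈ C and i, j ∈ I. Then for each i the canonical homomorphism μ_i : A_i → A is injective. -/
/-- The restricted direct product of a family of groups: the subgroup of the direct
product consisting of families with finitely many nontrivial entries. -/
def restrictedProd {ι : Type*} (A : ι → Type*) [∀ i, Group (A i)] : Subgroup (∀ i, A i) where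
  carrier := {f | {i | f i ≠ 1}.Finite}
  one_mem' := by
    show {i | (1 : ∀ i, A i) i ≠ 1}.Finite
    simp
  mul_mem' := by
    intro f g hf hg
    show {i | (f * g) i ≠ 1}.Finite
    refine (Set.Finite.union hf hg).subset ?_
    intro x hx
    simp only [Set.mem_union, Set.mem_setOf_eq] at *
    by_contra h
    push_neg at h
    exact hx (by simp [Pi.mul_apply, h.1, h.2])
  inv_mem' := by
    intro f hf
    show {i | f⁻¹ i ≠ 1}.Finite
    simpa using hf

lemma mulSingle_mem_restrictedProd {ι : Type*} [DecidableEq ι] {A : ι → Type*}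
    [∀ i, Group (A i)] (i : ι) (a : A i) : Pi.mulSingle i a ∈ restrictedProd A := by
  show {x | Pi.mulSingle i a x ≠ 1}.Finite
  refine (Set.finite_singleton i).subset ?_
  intro x hx
  simp only [Set.mem_setOf_eq] at hx
  simp only [Set.mem_singleton_iff]
  by_contra h
  exact hx (Pi.mulSingle_eq_of_ne h a)

/-- The canonical inclusion of a factor into the restricted direct product. -/
def inclRestricted {ι : Type*} [DecidableEq ι] (A : ι → Type*) [∀ i, Group (A i)]
    (i : ι) : A i →* restrictedProd A :=
  (MonoidHom.mulSingle A i).codRestrict _ (fun a => mulSingle_mem_restrictedProd i a)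

open scoped IsMulCommutative

section
variable {ι : Type*} [DecidableEq ι] {A : ι → Type*} [∀ i, Group (A i)] {C : Type*} [Group C]

/-- The map `C → Z(A i)` induced by `φ i`. -/
def centerRestrict (φ : ∀ i, C →* A i)
    (hcen : ∀ i (c : C), φ i c ∈ Subgroup.center (A i)) (i : ι) :
    C →* Subgroup.center (A i) :=
  (φ i).codRestrict _ (hcen i)

lemma centerRestrict_eq_one_iff (φ : ∀ i, C →* A i) (hinj : ∀ i, Function.Injective (φ i))
    (hcen : ∀ i (c : C), φ i c ∈ Subgroup.center (A i)) (i : ι) (c : C) :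
    centerRestrict φ hcen i c = 1 ↔ c = 1 := by
  constructor
  · intro h
    apply hinj i
    have := congrArg (Subtype.val) h
    simpa [centerRestrict] using this
  · rintro rfl; simp [centerRestrict]

/-- Auxiliary subgroup: elements of the restricted product all of whose coordinates lie in
the image of `φ`, with total "sum" (measured in the center of `A i`) equal to one. -/
def centralK (φ : ∀ i, C →* A i) (hinj : ∀ i, Function.Injective (φ i))
    (hcen : ∀ i (c : C), φ i c ∈ Subgroup.center (A i)) (i : ι) :
    Subgroup ↥(restrictedProd A) where
  carrier := {f | ∃ c : ι → C, (∀ j, (f : ∀ j, A j) j = φ j (c j)) ∧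
      ∏ᶠ j, centerRestrict φ hcen i (c j) = 1}
  one_mem' := by
    refine ⟨fun _ => 1, fun j => by simp, ?_⟩
    simp only [map_one]
    exact finprod_one
  mul_mem' := by
    rintro f g ⟨c, hc, hc1⟩ ⟨d, hd, hd1⟩
    have hsupp : ∀ (e : ι → C) (h : ↥(restrictedProd A)),
        (∀ j, (h : ∀ j, A j) j = φ j (e j)) →
        (Function.mulSupport fun j => centerRestrict φ hcen i (e j)).Finite := by
      intro e h he
      refine h.2.subset ?_
      intro j hj
      simp only [Function.mem_mulSupport] at hj
      simp only [Set.mem_setOf_eq, he j]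
      intro hone
      exact hj (by rw [(centerRestrict_eq_one_iff φ hinj hcen i (e j)).2 (hinj j (by simpa using hone))])
    refine ⟨c * d, fun j => by simp [hc j, hd j], ?_⟩
    calc ∏ᶠ j, centerRestrict φ hcen i ((c * d) j)
        = ∏ᶠ j, (centerRestrict φ hcen i (c j) * centerRestrict φ hcen i (d j)) := by
          simp
      _ = (∏ᶠ j, centerRestrict φ hcen i (c j)) * (∏ᶠ j, centerRestrict φ hcen i (d j)) :=
          finprod_mul_distrib (hsupp c f hc) (hsupp d g hd)
      _ = 1 := by rw [hc1, hd1, mul_one]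
  inv_mem' := by
    rintro f ⟨c, hc, hc1⟩
    refine ⟨fun j => (c j)⁻¹, fun j => by simp [hc j], ?_⟩
    have heq : (fun j => centerRestrict φ hcen i (c j)⁻¹)
        = fun j => (centerRestrict φ hcen i (c j))⁻¹ := by
      funext j; simp
    rw [heq, finprod_inv_distrib, hc1, inv_one]

end

section
variable {ι : Type*} [DecidableEq ι] {A : ι → Type*} [∀ i, Group (A i)] {C : Type*} [Group C]

lemma coe_inclRestricted (j : ι) (a : A j) :
    ((inclRestricted A j a : ↥(restrictedProd A)) : ∀ l, A l) = Pi.mulSingle j a := rfl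

lemma centralK_normal (φ : ∀ i, C →* A i) (hinj : ∀ i, Function.Injective (φ i))
    (hcen : ∀ i (c : C), φ i c ∈ Subgroup.center (A i)) (i : ι) :
    (centralK φ hinj hcen i).Normal := by
  constructor
  rintro f ⟨c, hc, hc1⟩ g
  refine ⟨c, fun j => ?_, hc1⟩
  have : ((g * f * g⁻¹ : ↥(restrictedProd A)) : ∀ l, A l) j
      = (g : ∀ l, A l) j * (f : ∀ l, A l) j * ((g : ∀ l, A l) j)⁻¹ := rfl
  rw [this, hc j]
  have hcomm := (Subgroup.mem_center_iff.1 (hcen j (c j))) ((g : ∀ l, A l) j)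
  rw [hcomm]
  group

lemma finprod_single_comp {M : Type*} [CommGroup M] (ψ : C →* M) (j : ι) (c : C) :
    ∏ᶠ l, ψ (Pi.mulSingle (M := fun _ : ι => C) j c l) = ψ c := by
  rw [finprod_eq_single _ j]
  · simp
  · intro x hx
    rw [Pi.mulSingle_eq_of_ne hx, map_one]

lemma generator_mem_centralK (φ : ∀ i, C →* A i) (hinj : ∀ i, Function.Injective (φ i))
    (hcen : ∀ i (c : C), φ i c ∈ Subgroup.center (A i)) (i : ι) (c : C) (j k : ι) :
    inclRestricted A j (φ j c) * (inclRestricted A k (φ k c))⁻¹ ∈ centralK φ hinj hcen i := by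
  refine ⟨fun l => Pi.mulSingle (M := fun _ : ι => C) j c l * (Pi.mulSingle (M := fun _ : ι => C) k c l)⁻¹, fun l => ?_, ?_⟩
  · have : ((inclRestricted A j (φ j c) * (inclRestricted A k (φ k c))⁻¹ :
        ↥(restrictedProd A)) : ∀ l, A l) l
        = Pi.mulSingle j (φ j c) l * (Pi.mulSingle k (φ k c) l)⁻¹ := rfl
    rw [this, map_mul, map_inv]
    congr 1
    · by_cases h : l = j
      · subst h; simp
      · rw [Pi.mulSingle_eq_of_ne h, Pi.mulSingle_eq_of_ne h, map_one]
    · by_cases h : l = k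
      · subst h; simp
      · rw [Pi.mulSingle_eq_of_ne h, Pi.mulSingle_eq_of_ne h, map_one]
  · have h1 : (Function.mulSupport fun l =>
        centerRestrict φ hcen i (Pi.mulSingle (M := fun _ : ι => C) j c l)).Finite := by
      refine (Set.finite_singleton j).subset ?_
      intro x hx
      simp only [Function.mem_mulSupport] at hx
      by_contra h
      exact hx (by rw [Pi.mulSingle_eq_of_ne h, map_one])
    have h2 : (Function.mulSupport fun l =>
        centerRestrict φ hcen i ((Pi.mulSingle (M := fun _ : ι => C) k c l)⁻¹)).Finite := by
      refine (Set.finite_singleton k).subset ?_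
      intro x hx
      simp only [Function.mem_mulSupport] at hx
      by_contra h
      exact hx (by rw [Pi.mulSingle_eq_of_ne h, inv_one, map_one])
    calc ∏ᶠ l, centerRestrict φ hcen i (Pi.mulSingle (M := fun _ : ι => C) j c l * (Pi.mulSingle (M := fun _ : ι => C) k c l)⁻¹)
        = ∏ᶠ l, (centerRestrict φ hcen i (Pi.mulSingle (M := fun _ : ι => C) j c l) *
            centerRestrict φ hcen i ((Pi.mulSingle (M := fun _ : ι => C) k c l)⁻¹)) := by simp
      _ = (∏ᶠ l, centerRestrict φ hcen i (Pi.mulSingle (M := fun _ : ι => C) j c l)) *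
          (∏ᶠ l, centerRestrict φ hcen i ((Pi.mulSingle (M := fun _ : ι => C) k c l)⁻¹)) :=
            finprod_mul_distrib h1 h2
      _ = 1 := by
          rw [finprod_single_comp]
          have : (fun l => centerRestrict φ hcen i ((Pi.mulSingle (M := fun _ : ι => C) k c l)⁻¹))
              = fun l => (centerRestrict φ hcen i (Pi.mulSingle (M := fun _ : ι => C) k c l))⁻¹ := by
            funext l; rw [map_inv]
          rw [this, finprod_inv_distrib, finprod_single_comp, mul_inv_cancel]

end

/-- For the generalized central product of a family of groups `A i`
amalgamating a subgroup `C` that is central in each factor (the quotient of the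
restricted direct product by the normal subgroup generated by `φ i c * (φ j c)⁻¹`),
each canonical map `μ i : A i → A` is injective. -/
theorem generalized_central_product_factor_injective
    {ι : Type*} [DecidableEq ι] {A : ι → Type*} [∀ i, Group (A i)] {C : Type*} [Group C]
    (φ : ∀ i, C →* A i) (hinj : ∀ i, Function.Injective (φ i))
    (hcen : ∀ i (c : C), φ i c ∈ Subgroup.center (A i)) (i : ι) :
    Function.Injective
      ((QuotientGroup.mk' (Subgroup.normalClosure
          {x : restrictedProd A | ∃ (c : C) (j k : ι),
            x = inclRestricted A j (φ j c) * (inclRestricted A k (φ k c))⁻¹})).comp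
        (inclRestricted A i)) := by
  rw [injective_iff_map_eq_one]
  intro a ha
  simp only [MonoidHom.comp_apply, QuotientGroup.mk'_apply] at ha
  rw [QuotientGroup.eq_one_iff] at ha
  haveI := centralK_normal φ hinj hcen i
  have hle : Subgroup.normalClosure
      {x : restrictedProd A | ∃ (c : C) (j k : ι),
        x = inclRestricted A j (φ j c) * (inclRestricted A k (φ k c))⁻¹}
      ≤ centralK φ hinj hcen i := by
    apply Subgroup.normalClosure_le_normal
    rintro x ⟨c, j, k, rfl⟩
    exact generator_mem_centralK φ hinj hcen i c j k
  obtain ⟨c, hc, hc1⟩ := hle ha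
  have hcoord : ∀ j, Pi.mulSingle i a j = φ j (c j) := by
    intro j
    have := hc j
    rwa [coe_inclRestricted] at this
  have hcj : ∀ j, j ≠ i → c j = 1 := by
    intro j hj
    apply hinj j
    rw [← hcoord j, Pi.mulSingle_eq_of_ne hj, map_one]
  have hprod : ∏ᶠ j, centerRestrict φ hcen i (c j) = centerRestrict φ hcen i (c i) := by
    apply finprod_eq_single
    intro x hx
    rw [hcj x hx, map_one]
  rw [hprod] at hc1
  have hci : c i = 1 := (centerRestrict_eq_one_iff φ hinj hcen i (c i)).1 hc1
  have := hcoord i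
  rw [Pi.mulSingle_eq_same, hci, map_one] at this
  exact this
end

section
/- Every free group is residually solvable. -/
open MonoidAlgebra List
open scoped commutatorElement

namespace MagnusAux

open scoped Classical

variable {X : Type*}

local notation "MA" => MonoidAlgebra ℤ (FreeMonoid X)

/-- a monomial is "good" if no two adjacent letters are equal -/
def good (m : FreeMonoid X) : Prop := m.toList.Chain' (· ≠ ·)

/-- vanishing on good monomials -/
def Vanish (f : MA) : Prop := ∀ m : FreeMonoid X, good m → f.coeff m = 0

theorem good_of_mul_left {p q m : FreeMonoid X} (h : p * q = m) (hm : good m) : good p := by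
  refine hm.prefix ⟨q.toList, ?_⟩
  rw [← FreeMonoid.toList_mul, h]

theorem good_of_mul_right {p q m : FreeMonoid X} (h : p * q = m) (hm : good m) : good q := by
  refine hm.suffix ⟨p.toList, ?_⟩
  rw [← FreeMonoid.toList_mul, h]

theorem Vanish.mul_right {f : MA} (hf : Vanish f) (g : MA) : Vanish (f * g) := by
  intro m hm
  classical
  rw [MonoidAlgebra.mul_apply]
  rw [Finsupp.sum]
  refine Finset.sum_eq_zero fun p hp => ?_
  rw [Finsupp.sum]
  refine Finset.sum_eq_zero fun q hq => ?_
  split_ifs with h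
  · rw [hf p (good_of_mul_left h hm), zero_mul]
  · rfl

theorem Vanish.mul_left {f : MA} (hf : Vanish f) (g : MA) : Vanish (g * f) := by
  intro m hm
  classical
  rw [MonoidAlgebra.mul_apply]
  rw [Finsupp.sum]
  refine Finset.sum_eq_zero fun p hp => ?_
  rw [Finsupp.sum]
  refine Finset.sum_eq_zero fun q hq => ?_
  split_ifs with h
  · rw [hf q (good_of_mul_right h hm), mul_zero]
  · rfl

theorem Vanish.add {f g : MA} (hf : Vanish f) (hg : Vanish g) : Vanish (f + g) := by
  intro m hm
  rw [MonoidAlgebra.coeff_add, Finsupp.add_apply, hf m hm, hg m hm, add_zero]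

theorem vanish_iff {f g : MA} : Vanish (f - g) ↔ ∀ m : FreeMonoid X, good m → f.coeff m = g.coeff m := by
  constructor
  · intro h m hm
    have := h m hm
    rw [MonoidAlgebra.coeff_sub, Finsupp.sub_apply, sub_eq_zero] at this
    exact this
  · intro h m hm
    rw [MonoidAlgebra.coeff_sub, Finsupp.sub_apply, h m hm, sub_self]

/-- The ring congruence identifying elements with the same coefficients on good monomials. -/
def KC (X : Type*) : RingCon (MonoidAlgebra ℤ (FreeMonoid X)) where
  r a b := Vanish (a - b)
  iseqv := by
    constructor
    · intro a
      rw [vanish_iff]; exact fun _ _ => rfl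
    · intro a b h
      rw [vanish_iff] at h ⊢
      exact fun m hm => (h m hm).symm
    · intro a b c h1 h2
      rw [vanish_iff] at *
      exact fun m hm => (h1 m hm).trans (h2 m hm)
  add' := by
    intro a b c d h1 h2
    show Vanish _
    have h1' : Vanish (a - b) := h1
    have h2' : Vanish (c - d) := h2
    have e : a + c - (b + d) = (a - b) + (c - d) := by abel
    rw [e]
    exact h1'.add h2'
  mul' := by
    intro a b c d h1 h2
    have h1' : Vanish (a - b) := h1
    have h2' : Vanish (c - d) := h2
    show Vanish _
    have e : a * c - b * d = a * (c - d) + (a - b) * d := by noncomm_ring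
    rw [e]
    exact (h2'.mul_left a).add (h1'.mul_right d)

end MagnusAux
section Part2
namespace MagnusAux

variable {X : Type*}

local notation "MA" => MonoidAlgebra ℤ (FreeMonoid X)

/-- The quotient ring -/
abbrev B (X : Type*) := (KC X).Quotient

noncomputable def mkB : MA →+* B X := (KC X).mk'

theorem mkB_surjective : Function.Surjective (mkB (X := X)) :=
  fun x => Quotient.exists_rep x

theorem coeff_eq_of_mkB_eq {a b : MA} (h : mkB a = mkB b) {m : FreeMonoid X}
    (hm : good m) : a.coeff m = b.coeff m := by
  have : (KC X) a b := (KC X).eq.mp h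
  exact sub_eq_zero.mp (by have h := (show Vanish (a - b) from this) m hm; rwa [MonoidAlgebra.coeff_sub, Finsupp.sub_apply] at h)

/-- the generator variables -/
noncomputable def XX (x : X) : MA := MonoidAlgebra.single (FreeMonoid.of x) (1 : ℤ)

theorem XX_sq (x : X) : mkB (XX x * XX x) = 0 := by
  classical
  have h0 : mkB (X := X) 0 = 0 := map_zero _
  rw [← h0]
  refine (KC X).eq.mpr ?_
  show Vanish _
  intro m hm
  rw [XX, MonoidAlgebra.single_mul_single, one_mul, sub_zero, MonoidAlgebra.single_apply]
  split_ifs with h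
  · exfalso
    rw [← h] at hm
    have : (FreeMonoid.of x * FreeMonoid.of x).toList = [x, x] := rfl
    rw [good, this] at hm
    exact List.rel_of_isChain_cons_cons hm rfl
  · rfl

theorem one_add_mul_one_sub (x : X) : mkB (1 + XX x) * mkB (1 - XX x) = 1 := by
  rw [← map_mul, show ((1 : MA) + XX x) * (1 - XX x) = 1 - XX x * XX x by noncomm_ring,
    map_sub, XX_sq, sub_zero, map_one]

theorem one_sub_mul_one_add (x : X) : mkB (1 - XX x) * mkB (1 + XX x) = 1 := by
  rw [← map_mul, show ((1 : MA) - XX x) * (1 + XX x) = 1 - XX x * XX x by noncomm_ring,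
    map_sub, XX_sq, sub_zero, map_one]

/-- the Magnus units -/
noncomputable def uu (x : X) : (B X)ˣ :=
  ⟨mkB (1 + XX x), mkB (1 - XX x), one_add_mul_one_sub x, one_sub_mul_one_add x⟩

theorem uu_inv_val (x : X) : ((uu x)⁻¹ : (B X)ˣ).val = mkB (1 - XX x) := rfl

/-- vanishing in low degrees -/
def lowdeg (k : ℕ) (a : MA) : Prop := ∀ m : FreeMonoid X, m.length < k → a.coeff m = 0

theorem lowdeg.mono {k k' : ℕ} (h : k' ≤ k) {a : MA} (ha : lowdeg k a) : lowdeg k' a :=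
  fun m hm => ha m (lt_of_lt_of_le hm h)

theorem lowdeg.add {k : ℕ} {a b : MA} (ha : lowdeg k a) (hb : lowdeg k b) :
    lowdeg k (a + b) := by
  intro m hm; rw [MonoidAlgebra.coeff_add, Finsupp.add_apply, ha m hm, hb m hm, add_zero]

theorem lowdeg.neg {k : ℕ} {a : MA} (ha : lowdeg k a) : lowdeg k (-a) := by
  intro m hm; rw [MonoidAlgebra.coeff_neg, Finsupp.neg_apply, ha m hm, neg_zero]

theorem lowdeg.mul_left {k : ℕ} {a : MA} (ha : lowdeg k a) (c : MA) :
    lowdeg k (c * a) := by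
  intro m hm
  classical
  rw [MonoidAlgebra.mul_apply, Finsupp.sum]
  refine Finset.sum_eq_zero fun p hp => ?_
  rw [Finsupp.sum]
  refine Finset.sum_eq_zero fun q hq => ?_
  split_ifs with h
  · rw [ha q ?_, mul_zero]
    have := congrArg FreeMonoid.length h
    rw [FreeMonoid.length_mul] at this
    omega
  · rfl

theorem lowdeg.sub {k : ℕ} {a b : MA} (ha : lowdeg k a) (hb : lowdeg k b) :
    lowdeg k (a - b) := by
  rw [sub_eq_add_neg]; exact ha.add hb.neg

theorem lowdeg.mul_right {k : ℕ} {a : MA} (ha : lowdeg k a) (c : MA) :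
    lowdeg k (a * c) := by
  intro m hm
  classical
  rw [MonoidAlgebra.mul_apply, Finsupp.sum]
  refine Finset.sum_eq_zero fun p hp => ?_
  rw [Finsupp.sum]
  refine Finset.sum_eq_zero fun q hq => ?_
  split_ifs with h
  · rw [ha p ?_, zero_mul]
    have := congrArg FreeMonoid.length h
    rw [FreeMonoid.length_mul] at this
    omega
  · rfl

theorem lowdeg.mul {j k : ℕ} {a b : MA} (ha : lowdeg j a) (hb : lowdeg k b) :
    lowdeg (j + k) (a * b) := by
  intro m hm
  classical
  rw [MonoidAlgebra.mul_apply, Finsupp.sum]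
  refine Finset.sum_eq_zero fun p hp => ?_
  rw [Finsupp.sum]
  refine Finset.sum_eq_zero fun q hq => ?_
  split_ifs with h
  · have := congrArg FreeMonoid.length h
    rw [FreeMonoid.length_mul] at this
    rcases lt_or_ge p.length j with hj | hj
    · rw [ha p hj, zero_mul]
    · rw [hb q (by omega), mul_zero]
  · rfl

/-- the filtration subgroups -/
noncomputable def G (k : ℕ) : Subgroup (B X)ˣ where
  carrier := {v | ∃ a : MA, lowdeg k a ∧ (v.val : B X) = mkB (1 + a)}
  one_mem' := ⟨0, fun m _ => rfl, by rw [add_zero, map_one]; rfl⟩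
  mul_mem' := by
    rintro v w ⟨a, ha, hva⟩ ⟨b, hb, hwb⟩
    refine ⟨a + b + a * b, (ha.add hb).add ((ha.mul hb).mono (by omega)), ?_⟩
    rw [Units.val_mul, hva, hwb, ← map_mul]
    congr 1
    rw [add_mul, one_mul, mul_add, mul_one]
    abel
  inv_mem' := by
    rintro v ⟨a, ha, hva⟩
    obtain ⟨c, hc⟩ := mkB_surjective (v⁻¹ : (B X)ˣ).val
    have h1 : (v⁻¹ : (B X)ˣ).val * v.val = 1 := v.inv_mul
    refine ⟨-(c * a), (ha.mul_left c).neg, ?_⟩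
    have : (v⁻¹ : (B X)ˣ).val = 1 - mkB c * mkB a := by
      have := congrArg (· * mkB a) hc
      calc (v⁻¹ : (B X)ˣ).val = (v⁻¹ : (B X)ˣ).val * (mkB (1 + a)) - (v⁻¹ : (B X)ˣ).val * mkB a := by
            rw [map_add, map_one, mul_add, mul_one, add_sub_cancel_right]
        _ = 1 - mkB c * mkB a := by rw [← hva, h1, hc]
    rw [this, ← map_mul]
    rw [show (1 : B X) - mkB (c * a) = mkB (1 + -(c * a)) by
      rw [map_add, map_one, map_neg, sub_eq_add_neg]]

theorem commutator_mem_G {j : ℕ} {u v : (B X)ˣ} (hu : u ∈ G j) (hv : v ∈ G j) :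
    ⁅u, v⁆ ∈ G (j + j) := by
  obtain ⟨a, ha, hua⟩ := hu
  obtain ⟨b, hb, hvb⟩ := hv
  obtain ⟨c, hc⟩ := mkB_surjective (u⁻¹ : (B X)ˣ).val
  obtain ⟨d, hd⟩ := mkB_surjective (v⁻¹ : (B X)ˣ).val
  refine ⟨((1+a) * (1+b) - (1+b) * (1+a)) * (c * d), ?_, ?_⟩
  · have : (1+a) * (1+b) - (1+b) * (1+a) = a * b - b * a := by noncomm_ring
    rw [this]
    exact (((ha.mul hb).sub (hb.mul ha)).mul_right (c * d))
  · have h1 : u.val * (u⁻¹ : (B X)ˣ).val = 1 := u.mul_inv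
    have h2 : v.val * (v⁻¹ : (B X)ˣ).val = 1 := v.mul_inv
    have e1 : (v.val * u.val) * ((u⁻¹ : (B X)ˣ).val * (v⁻¹ : (B X)ˣ).val) = 1 := by
      rw [mul_assoc, ← mul_assoc u.val, h1, one_mul, h2]
    have key : ⁅u, v⁆.val =
        1 + (u.val * v.val - v.val * u.val) * ((u⁻¹ : (B X)ˣ).val * (v⁻¹ : (B X)ˣ).val) := by
      calc ⁅u, v⁆.val = (u.val * v.val) * ((u⁻¹ : (B X)ˣ).val * (v⁻¹ : (B X)ˣ).val) := by
            rw [commutatorElement_def, Units.val_mul, Units.val_mul, Units.val_mul, mul_assoc]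
        _ = (v.val * u.val) * ((u⁻¹ : (B X)ˣ).val * (v⁻¹ : (B X)ˣ).val) +
              (u.val * v.val - v.val * u.val) * ((u⁻¹ : (B X)ˣ).val * (v⁻¹ : (B X)ˣ).val) := by
            rw [← add_mul]
            congr 1
            abel
        _ = 1 + (u.val * v.val - v.val * u.val) *
              ((u⁻¹ : (B X)ˣ).val * (v⁻¹ : (B X)ˣ).val) := by rw [e1]
    rw [key, hua, hvb, ← hc, ← hd, ← map_mul, ← map_mul, ← map_mul, ← map_sub, ← map_mul]
    rw [show (1 : B X) + mkB (((1+a) * (1+b) - (1+b) * (1+a)) * (c * d)) =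
        mkB (1 + ((1+a) * (1+b) - (1+b) * (1+a)) * (c * d)) by rw [map_add, map_one]]

end MagnusAux
end Part2
section Part3
namespace MagnusAux

variable {X : Type*}

local notation "MA" => MonoidAlgebra ℤ (FreeMonoid X)

theorem fm_mul_eq_one_iff {p q : FreeMonoid X} : p * q = 1 ↔ p = 1 ∧ q = 1 := by
  constructor
  · intro h
    have := congrArg FreeMonoid.toList h
    rw [FreeMonoid.toList_mul, FreeMonoid.toList_one, List.append_eq_nil_iff] at this
    constructor
    · apply FreeMonoid.toList.injective
      rw [FreeMonoid.toList_one]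
      exact this.1
    · apply FreeMonoid.toList.injective
      rw [FreeMonoid.toList_one]
      exact this.2
  · rintro ⟨rfl, rfl⟩
    rw [one_mul]

theorem coeff_one_mul (f g : MA) : (f * g).coeff 1 = f.coeff 1 * g.coeff 1 := by
  classical
  rw [MonoidAlgebra.mul_apply_antidiagonal f g 1 {(1, 1)} (by
    intro p
    constructor
    · intro hp
      rw [Finset.mem_singleton] at hp
      rw [hp, one_mul]
    · intro hp
      rw [Finset.mem_singleton]
      obtain ⟨h1, h2⟩ := fm_mul_eq_one_iff.mp hp
      exact Prod.ext h1 h2)]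
  rw [Finset.sum_singleton]

theorem one_coeff_one : ((1 : MA)).coeff (1 : FreeMonoid X) = 1 := by
  rw [MonoidAlgebra.one_def, MonoidAlgebra.coeff_single, Finsupp.single_eq_same]

theorem good_one : good (1 : FreeMonoid X) := by
  rw [good, FreeMonoid.toList_one]
  exact List.isChain_nil

theorem const_coeff_of_val {u : (B X)ˣ} {f f' : MA} (hf : mkB f = u.val)
    (hf' : mkB f' = (u⁻¹ : (B X)ˣ).val) : f.coeff 1 * f'.coeff 1 = 1 := by
  have h : mkB (f * f') = mkB 1 := by
    rw [map_mul, hf, hf', u.mul_inv, map_one]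
  have := coeff_eq_of_mkB_eq h good_one
  rw [coeff_one_mul, one_coeff_one] at this
  exact this

theorem commutator_mem_G_one (u v : (B X)ˣ) : ⁅u, v⁆ ∈ G 1 := by
  obtain ⟨f, hf⟩ := mkB_surjective u.val
  obtain ⟨g, hg⟩ := mkB_surjective v.val
  obtain ⟨f', hf'⟩ := mkB_surjective (u⁻¹ : (B X)ˣ).val
  obtain ⟨g', hg'⟩ := mkB_surjective (v⁻¹ : (B X)ˣ).val
  have hval : ⁅u, v⁆.val = mkB (f * g * f' * g') := by
    rw [commutatorElement_def, Units.val_mul, Units.val_mul, Units.val_mul,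
      map_mul, map_mul, map_mul, hf, hg, hf', hg']
  have hconst : (f * g * f' * g').coeff 1 = 1 := by
    rw [coeff_one_mul, coeff_one_mul, coeff_one_mul]
    have h1 := const_coeff_of_val hf hf'
    have h2 := const_coeff_of_val hg hg'
    nlinarith [h1, h2]
  refine ⟨f * g * f' * g' - 1, ?_, ?_⟩
  · intro m hm
    have hm1 : m = 1 := by
      rwa [Nat.lt_one_iff, FreeMonoid.length_eq_zero] at hm
    rw [hm1, MonoidAlgebra.coeff_sub, Finsupp.sub_apply, hconst, one_coeff_one, sub_self]
  · rw [hval]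
    congr 1
    abel

theorem derivedSeries_le_G (n : ℕ) :
    derivedSeries (B X)ˣ (n + 1) ≤ G (2 ^ n) := by
  induction n with
  | zero =>
    rw [derivedSeries_succ]
    rw [Subgroup.commutator_le]
    intro u _ v _
    exact commutator_mem_G_one u v
  | succ n ih =>
    rw [derivedSeries_succ]
    rw [Subgroup.commutator_le]
    intro u hu v hv
    have := commutator_mem_G (ih hu) (ih hv)
    have h2 : 2 ^ n + 2 ^ n = 2 ^ (n + 1) := by ring
    rwa [h2] at this

end MagnusAux
end Part3
section Part4
namespace MagnusAux

variable {X : Type*} [DecidableEq X]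

local notation "MA" => MonoidAlgebra ℤ (FreeMonoid X)

/-- the factor associated to a signed letter -/
noncomputable def fac (p : X × Bool) : MA :=
  1 + (if p.2 then (1 : ℤ) else -1) • XX p.1

/-- image of a word under the Magnus map, in the big algebra -/
noncomputable def PA (L : List (X × Bool)) : MA := (L.map fac).prod

theorem length_toList (m : FreeMonoid X) : m.length = m.toList.length := rfl

theorem length_ofList (l : List X) : (FreeMonoid.ofList l).length = l.length := rfl

theorem XX_mul_apply_cons (x : X) (t : MA) (l : List X) :
    (XX x * t).coeff (FreeMonoid.ofList (x :: l)) = t.coeff (FreeMonoid.ofList l) := by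
  rw [XX, MonoidAlgebra.coeff_single_mul_eq_mul_coeff (x := t) (FreeMonoid.ofList l), one_mul]
  intro q _
  constructor
  · intro h
    have h2 := congrArg FreeMonoid.toList h
    rw [FreeMonoid.toList_mul, FreeMonoid.toList_of, FreeMonoid.toList_ofList] at h2
    have h3 : x :: q.toList = x :: l := h2
    apply FreeMonoid.toList.injective
    rw [FreeMonoid.toList_ofList]
    exact (List.cons.injEq _ _ _ _).mp h3 |>.2
  · rintro rfl
    rfl

theorem XX_mul_apply_ne (x : X) (t : MA) {m : FreeMonoid X}
    (h : ∀ q : FreeMonoid X, FreeMonoid.of x * q ≠ m) : (XX x * t).coeff m = 0 := by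
  classical
  rw [XX, MonoidAlgebra.mul_apply, MonoidAlgebra.coeff_single, Finsupp.sum_single_index]
  · rw [Finsupp.sum]
    refine Finset.sum_eq_zero fun q hq => ?_
    rw [if_neg (h q)]
  · simp [Finsupp.sum]

theorem dest_rep (x : X) : ∀ (r : ℕ) (t : List X), (∀ y ∈ t.head?, y ≠ x) →
    List.destutter (· ≠ ·) (List.replicate (r + 1) x ++ t) =
      x :: List.destutter (· ≠ ·) t := by
  intro r
  induction r with
  | zero =>
    intro t ht
    rw [List.replicate_succ, List.replicate_zero, List.cons_append, List.nil_append]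
    cases t with
    | nil => rw [List.destutter_singleton, List.destutter_nil]
    | cons y t' =>
      have hy : y ≠ x := ht y rfl
      rw [List.destutter_cons_cons, if_pos hy.symm, List.destutter_cons']
  | succ r ih =>
    intro t ht
    have h2 : List.replicate (r + 1) x ++ t = x :: (List.replicate r x ++ t) := by
      rw [List.replicate_succ, List.cons_append]
    have h1 : List.replicate (r + 1 + 1) x ++ t = x :: (List.replicate (r + 1) x ++ t) := by
      rw [List.replicate_succ, List.cons_append]
    rw [h1, h2, List.destutter_cons_cons, if_neg (by simp), ← List.destutter_cons', ← h2]
    exact ih t ht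

theorem pow_collapse (x : X) (e : ℤ) :
    ∀ r : ℕ, mkB ((1 + e • XX x) ^ r) = mkB (1 + ((r : ℤ) * e) • XX x) := by
  intro r
  induction r with
  | zero => simp
  | succ r ih =>
    rw [pow_succ, map_mul, ih, ← map_mul]
    have expand : ((1 : MA) + ((r : ℤ) * e) • XX x) * (1 + e • XX x) =
        (1 + (((r : ℤ) * e + e) • XX x)) + (((r : ℤ) * e) * e) • (XX x * XX x) := by
      rw [add_mul, one_mul, mul_add, mul_one, smul_mul_smul_comm, add_smul]
      abel
    rw [expand, map_add, map_zsmul, XX_sq, smul_zero, add_zero]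
    have hcast : (r : ℤ) * e + e = ((r + 1 : ℕ) : ℤ) * e := by push_cast; ring
    rw [hcast]

theorem good_ofList {l : List X} (h : l.Chain' (· ≠ ·)) : good (FreeMonoid.ofList l) := by
  rw [good, FreeMonoid.toList_ofList]
  exact h

/-- The key combinatorial lemma -/
theorem key : ∀ (N : ℕ) (L : List (X × Bool)), L.length ≤ N →
    L.Chain' (fun p q => p.1 = q.1 → p.2 = q.2) →
    ∀ a : MA, mkB a = mkB (PA L) →
    (∀ m : FreeMonoid X, good m →
      (List.destutter (· ≠ ·) (L.map Prod.fst)).length < m.length → a.coeff m = 0) ∧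
    a.coeff (FreeMonoid.ofList (List.destutter (· ≠ ·) (L.map Prod.fst))) ≠ 0 := by
  classical
  have base : ∀ a : MA, mkB a = mkB (PA []) →
      (∀ m : FreeMonoid X, good m →
        (List.destutter (· ≠ ·) (([] : List (X × Bool)).map Prod.fst)).length < m.length →
          a.coeff m = 0) ∧
      a.coeff (FreeMonoid.ofList (List.destutter (· ≠ ·)
        (([] : List (X × Bool)).map Prod.fst))) ≠ 0 := by
    intro a ha
    have hPA : PA ([] : List (X × Bool)) = 1 := by rw [PA, List.map_nil, List.prod_nil]
    rw [hPA] at ha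
    constructor
    · intro m hm hlen
      rw [List.map_nil, List.destutter_nil, List.length_nil] at hlen
      have h1 : a.coeff m = (1 : MA).coeff m := coeff_eq_of_mkB_eq (by rw [ha, map_one]) hm
      rw [h1, MonoidAlgebra.one_def, MonoidAlgebra.coeff_single, Finsupp.single_apply, if_neg]
      intro h
      rw [← h, length_toList, FreeMonoid.toList_one] at hlen
      simp at hlen
    · rw [List.map_nil, List.destutter_nil, FreeMonoid.ofList_nil]
      have h1 : a.coeff 1 = (1 : MA).coeff 1 := coeff_eq_of_mkB_eq (by rw [ha, map_one]) good_one
      rw [h1, one_coeff_one]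
      exact one_ne_zero
  intro N
  induction N with
  | zero =>
    intro L hL _ a ha
    rw [Nat.le_zero, List.length_eq_zero_iff] at hL
    subst hL
    exact base a ha
  | succ N ih =>
    intro L hL hred a ha
    match L with
    | [] => exact base a ha
    | p :: L₁ =>
      set x := p.1 with hx
      -- extract the first run
      set tw := (p :: L₁).takeWhile (fun q => decide (q = p)) with htw
      set T := (p :: L₁).dropWhile (fun q => decide (q = p)) with hT
      have hsplit : tw ++ T = p :: L₁ := List.takeWhile_append_dropWhile
      have htw_ne : tw ≠ [] := by
        rw [htw, List.takeWhile_cons_of_pos (by simp)]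
        simp
      have htw_rep : tw = List.replicate tw.length p := by
        rw [List.eq_replicate_length]
        intro b hb
        have := List.mem_takeWhile_imp hb
        simpa using this
      obtain ⟨r, hr⟩ : ∃ r, tw.length = r + 1 := by
        have hlen0 : tw.length ≠ 0 := by
          intro h
          exact htw_ne (List.length_eq_zero_iff.mp h)
        exact ⟨tw.length - 1, by omega⟩
      -- T facts
      have hT_chain : T.Chain' (fun p q => p.1 = q.1 → p.2 = q.2) := by
        refine hred.suffix ?_
        rw [hT]
        exact hsplit ▸ List.dropWhile_suffix _
      have hT_len : T.length ≤ N := by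
        have h9 := congrArg List.length hsplit
        rw [List.length_append, hr, List.length_cons] at h9
        rw [List.length_cons] at hL
        omega
      -- junction: head of T has different letter
      have hjunction : ∀ q ∈ T.head?, q.1 ≠ x := by
        intro q hq
        have hqsome : T.head? = some q := hq
        have hqp : q ≠ p := by
          have h5 := List.head?_dropWhile_not (fun q => decide (q = p)) (p :: L₁)
          rw [← hT, hqsome] at h5
          simpa using h5
        have hchain : (tw ++ T).Chain' (fun p q => p.1 = q.1 → p.2 = q.2) :=
          hsplit ▸ hred
        unfold List.Chain' at hchain; rw [List.isChain_append] at hchain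
        have hlast : tw.getLast? = some p := by
          rw [htw_rep, hr, List.getLast?_replicate]
          simp
        have hR := hchain.2.2 p (by rw [hlast]; rfl) q (by rw [hqsome]; rfl)
        intro hq1
        exact hqp (Prod.ext (by rw [hq1]) (by rw [hR hq1.symm]))
      -- destutter splits
      have hmapfst : (p :: L₁).map Prod.fst = List.replicate (r + 1) x ++ T.map Prod.fst := by
        rw [← hsplit, List.map_append]
        congr 1
        rw [htw_rep, List.map_replicate, hr]
      have hdest : List.destutter (· ≠ ·) ((p :: L₁).map Prod.fst) =
          x :: List.destutter (· ≠ ·) (T.map Prod.fst) := by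
        rw [hmapfst]
        apply dest_rep
        intro y hy
        rw [List.head?_map] at hy
        rcases hTh : T.head? with _ | q
        · rw [hTh] at hy; simp at hy
        · rw [hTh] at hy
          have hyq : y = q.1 := by simpa using hy.symm
          rw [hyq]
          exact hjunction q hTh
      -- algebra: PA L = (fac p)^(r+1) * PA T
      have hPA : PA (p :: L₁) = fac p ^ (r + 1) * PA T := by
        rw [← hsplit, PA, List.map_append, List.prod_append, htw_rep, List.map_replicate,
          List.prod_replicate, hr]
        rfl
      set e : ℤ := if p.2 then 1 else -1 with he
      set ρ : ℤ := ((r : ℤ) + 1) * e with hρ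
      have hρ_ne : ρ ≠ 0 := by
        have hrpos : (0 : ℤ) < (r : ℤ) + 1 := by positivity
        rw [hρ, he]
        split_ifs with h
        · rw [mul_one]; omega
        · intro hc; rw [mul_neg, mul_one, neg_eq_zero] at hc; omega
      have hfac : fac p = 1 + e • XX x := rfl
      have hcollapse : mkB (PA (p :: L₁)) = mkB ((1 + ρ • XX x) * PA T) := by
        have hcast : (((r + 1 : ℕ) : ℤ)) * e = ρ := by rw [hρ]; push_cast; ring
        rw [hPA, map_mul, hfac, pow_collapse, hcast, ← map_mul]
      -- the coefficient identity
      set t : MA := PA T with ht_def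
      obtain ⟨ihA, ihB⟩ := ih T hT_len hT_chain t rfl
      have hcoeff : ∀ m : FreeMonoid X, good m →
          a.coeff m = t.coeff m + ρ * (XX x * t).coeff m := by
        intro m hm
        have h1 : a.coeff m = ((1 + ρ • XX x) * t).coeff m :=
          coeff_eq_of_mkB_eq (by rw [ha, hcollapse]) hm
        rw [h1, add_mul, one_mul, smul_mul_assoc, MonoidAlgebra.coeff_add, Finsupp.add_apply, MonoidAlgebra.coeff_smul, Finsupp.smul_apply,
          smul_eq_mul]
      constructor
      · -- part 1: high-degree coefficients vanish
        intro m hm hlen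
        rw [hdest, List.length_cons] at hlen
        rw [hcoeff m hm]
        have htm : t.coeff m = 0 := ihA m hm (by omega)
        have hXt : (XX x * t).coeff m = 0 := by
          rcases hml : m.toList with _ | ⟨y, l'⟩
          · have h0 : m.length = 0 := by rw [length_toList, hml]; rfl
            omega
          · by_cases hyx : y = x
            · have hm_eq : m = FreeMonoid.ofList (x :: l') := by
                apply FreeMonoid.toList.injective
                rw [FreeMonoid.toList_ofList, hml, hyx]
              rw [hm_eq, XX_mul_apply_cons]
              apply ihA
              · apply good_ofList
                have h7 := hm
                rw [good, hml] at h7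
                exact h7.tail
              · rw [length_ofList]
                have h8 : m.length = l'.length + 1 := by
                  rw [length_toList, hml, List.length_cons]
                omega
            · apply XX_mul_apply_ne
              intro q hq
              have h2 := congrArg FreeMonoid.toList hq
              rw [FreeMonoid.toList_mul, FreeMonoid.toList_of, hml] at h2
              have h3 : x :: q.toList = y :: l' := h2
              exact hyx ((List.cons.injEq _ _ _ _).mp h3).1.symm
        rw [htm, hXt, mul_zero, add_zero]
      · -- part 2: the destutter coefficient is nonzero
        rw [hdest]
        have hgood : good (FreeMonoid.ofList (x :: List.destutter (· ≠ ·) (T.map Prod.fst))) := by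
          apply good_ofList
          rw [← hdest]
          exact List.isChain_destutter _ _
        rw [hcoeff _ hgood]
        have htm : t.coeff (FreeMonoid.ofList (x :: List.destutter (· ≠ ·) (T.map Prod.fst))) = 0 := by
          apply ihA _ hgood
          rw [length_ofList, List.length_cons]
          omega
        rw [htm, XX_mul_apply_cons, zero_add]
        exact mul_ne_zero hρ_ne ihB

end MagnusAux
end Part4
section Part5
namespace MagnusAux

variable {X : Type*} [DecidableEq X]

local notation "MA" => MonoidAlgebra ℤ (FreeMonoid X)

theorem exists_bad {α : Type*} {R : α → α → Prop} :
    ∀ l : List α, ¬ l.Chain' R → ∃ l₁ a b l₂, l = l₁ ++ a :: b :: l₂ ∧ ¬ R a b := by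
  intro l
  induction l with
  | nil => intro h; exact absurd List.isChain_nil h
  | cons a t iht =>
    intro h
    unfold List.Chain' at h; rw [List.isChain_cons] at h
    push_neg at h
    by_cases hct : t.Chain' R
    · have hnall : ¬ ∀ y ∈ t.head?, R a y := fun hall => h hall hct
      push_neg at hnall
      obtain ⟨y, hy, hRy⟩ := hnall
      have hty : t = y :: t.tail := by
        rcases t with _ | ⟨c, tl⟩
        · simp at hy
        · simp at hy; rw [hy]; rfl
      exact ⟨[], a, y, t.tail, by rw [List.nil_append, ← hty], hRy⟩
    · obtain ⟨l₁, c, d, l₂, hdec, hRcd⟩ := iht hct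
      exact ⟨a :: l₁, c, d, l₂, by rw [hdec, List.cons_append], hRcd⟩

theorem toWord_chain (w : FreeGroup X) :
    w.toWord.Chain' (fun p q : X × Bool => p.1 = q.1 → p.2 = q.2) := by
  by_contra h
  obtain ⟨l₁, a, b, l₂, hdec, hR⟩ := exists_bad _ h
  push_neg at hR
  obtain ⟨h1, h2⟩ := hR
  have hb : b = (a.1, !a.2) := by
    have hb2 : b.2 = !a.2 := by
      rcases ha2 : a.2 <;> rcases hb2 : b.2 <;> simp_all
    exact Prod.ext h1.symm hb2
  rw [hb] at hdec
  have hred : FreeGroup.reduce w.toWord = l₁ ++ (a.1, a.2) :: (a.1, !a.2) :: l₂ := by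
    rw [FreeGroup.reduce_toWord, hdec]
  exact FreeGroup.reduce.not hred

theorem coe_lift_mk (L : List (X × Bool)) :
    ((FreeGroup.lift (fun x : X => uu x) (FreeGroup.mk L) : (B X)ˣ) : B X) = mkB (PA L) := by
  rw [FreeGroup.lift_mk]
  rw [show ((List.prod (L.map fun gp => cond gp.2 (uu gp.1) (uu gp.1)⁻¹) : (B X)ˣ) : B X) =
    (Units.coeHom (B X)) (List.prod (L.map fun gp => cond gp.2 (uu gp.1) (uu gp.1)⁻¹)) from rfl]
  rw [map_list_prod, List.map_map, PA, map_list_prod, List.map_map]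
  congr 1
  apply List.map_congr_left
  intro p _
  simp only [Function.comp_apply]
  rcases hp2 : p.2 with _ | _
  · rw [cond_false, Units.coeHom_apply, uu_inv_val, fac, hp2, if_neg (by simp), neg_smul, one_smul,
      ← sub_eq_add_neg]
  · rw [cond_true, Units.coeHom_apply, fac, hp2, if_pos rfl, one_smul]
    rfl

theorem freeGroup_iInf_derivedSeries :
    ⨅ n : ℕ, derivedSeries (FreeGroup X) n = ⊥ := by
  rw [eq_bot_iff]
  intro w hw
  rw [Subgroup.mem_iInf] at hw
  rw [Subgroup.mem_bot]
  classical
  by_contra hne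
  set L := w.toWord with hLdef
  have hL_ne : L ≠ [] := by
    intro h
    apply hne
    apply FreeGroup.toWord_injective
    rw [← hLdef, h, FreeGroup.toWord_one]
  set dL := List.destutter (· ≠ ·) (L.map Prod.fst) with hdL
  set k := dL.length with hk
  have hdL_ne : dL ≠ [] := by
    rw [hdL]
    intro h
    rw [List.destutter_eq_nil] at h
    exact hL_ne (List.map_eq_nil_iff.mp h)
  set φ := FreeGroup.lift (fun x : X => uu x) with hφ
  have hφw : φ w ∈ derivedSeries (B X)ˣ (k + 1) :=
    map_derivedSeries_le_derivedSeries φ (k + 1) ⟨w, hw (k + 1), rfl⟩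
  obtain ⟨a, hlow, hval⟩ := derivedSeries_le_G k hφw
  have hval2 : (φ w).val = mkB (PA L) := by
    rw [hφ, show w = FreeGroup.mk L by rw [hLdef, FreeGroup.mk_toWord]]
    exact coe_lift_mk L
  have hmk : mkB ((1 : MA) + a) = mkB (PA L) := by rw [← hval, hval2]
  have hkey := (key L.length L le_rfl (toWord_chain w) (1 + a) hmk).2
  apply hkey
  rw [MonoidAlgebra.coeff_add, Finsupp.add_apply]
  have h1 : (1 : MA).coeff (FreeMonoid.ofList dL) = 0 := by
    rw [MonoidAlgebra.one_def, MonoidAlgebra.coeff_single, Finsupp.single_apply, if_neg]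
    intro h
    have h' := congrArg FreeMonoid.toList h
    rw [FreeMonoid.toList_one, FreeMonoid.toList_ofList] at h'
    exact hdL_ne h'.symm
  have h2 : a.coeff (FreeMonoid.ofList dL) = 0 := by
    apply hlow
    rw [length_ofList, ← hk]
    exact Nat.lt_two_pow_self
  rw [h1, h2, add_zero]

end MagnusAux
end Part5

/-- A group is residually solvable iff every nontrivial element survives in some
solvable quotient; equivalently, the intersection of the derived series is trivial. -/
def ResiduallySolvable (G : Type*) [Group G] : Prop :=
  ⨅ n : ℕ, derivedSeries G n = ⊥

/-- Every free group is residually solvable. -/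
theorem freeGroup_residuallySolvable (F : Type*) [Group F] [IsFreeGroup F] :
    ResiduallySolvable F := by
  classical
  set X := IsFreeGroup.Generators F
  letI : DecidableEq X := Classical.decEq X
  set e : F ≃* FreeGroup X := IsFreeGroup.toFreeGroup F
  rw [ResiduallySolvable, eq_bot_iff]
  intro x hx
  rw [Subgroup.mem_iInf] at hx
  rw [Subgroup.mem_bot]
  have hmem : e x ∈ ⨅ n : ℕ, derivedSeries (FreeGroup X) n := by
    rw [Subgroup.mem_iInf]
    intro n
    exact map_derivedSeries_le_derivedSeries e.toMonoidHom n ⟨x, hx n, rfl⟩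
  rw [MagnusAux.freeGroup_iInf_derivedSeries, Subgroup.mem_bot] at hmem
  apply e.injective
  rw [hmem, map_one]
end

section
/- Any extension of a free group by a nilpotent group is residually solvable: if K ⊴ G with K free and G/K nilpotent, then G is residually solvable. -/
set_option linter.unusedSectionVars false
set_option linter.unusedVariables false

noncomputable section

namespace MagnusRS

variable {β : Type*} [DecidableEq β] (k : ℕ)

open scoped commutatorElement

/-- Index type: lists over `β` of length at most `k`. -/
abbrev Idx (β : Type*) (k : ℕ) := {l : List β // l.length ≤ k}

/-- The free `ℤ`-module on `Idx β k`. -/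
abbrev M (β : Type*) (k : ℕ) := Idx β k →₀ ℤ

abbrev E (β : Type*) (k : ℕ) := Module.End ℤ (M β k)

/-- Filtration by minimal length in the support. -/
def Mfil (j : ℕ) : Submodule ℤ (M β k) where
  carrier := {v | ∀ l : Idx β k, l.1.length < j → v l = 0}
  add_mem' := fun ha hb l hl => by simp [Finsupp.add_apply, ha l hl, hb l hl]
  zero_mem' := fun l _ => rfl
  smul_mem' := fun c v hv l hl => by simp [Finsupp.smul_apply, hv l hl]

lemma Mfil_anti {i j : ℕ} (h : i ≤ j) : Mfil (β := β) k j ≤ Mfil k i :=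
  fun v hv l hl => hv l (lt_of_lt_of_le hl h)

lemma mem_Mfil_zero (v : M β k) : v ∈ Mfil k 0 := fun _ hl => absurd hl (by omega)

lemma eq_zero_of_mem_Mfil (v : M β k) (hv : v ∈ Mfil k (k + 1)) : v = 0 :=
  Finsupp.ext fun l => hv l (by have := l.2; omega)

/-- Filtration on endomorphisms: raises length by at least `a`. -/
def Nf (a : ℕ) : Submodule ℤ (E β k) where
  carrier := {f | ∀ j, ∀ v ∈ Mfil (β := β) k j, f v ∈ Mfil k (j + a)}
  add_mem' := fun hf hg j v hv => Submodule.add_mem _ (hf j v hv) (hg j v hv)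
  zero_mem' := fun j v _ => Submodule.zero_mem _
  smul_mem' := fun c f hf j v hv => Submodule.smul_mem _ c (hf j v hv)

lemma Nf_anti {a b : ℕ} (h : a ≤ b) : Nf (β := β) k b ≤ Nf k a :=
  fun f hf j v hv => Mfil_anti k (by omega) (hf j v hv)

lemma Nf_mul {a b : ℕ} {f g : E β k} (hf : f ∈ Nf k a) (hg : g ∈ Nf k b) :
    f * g ∈ Nf k (a + b) := fun j v hv => by
  have := hf (j + b) (g v) (hg j v hv)
  rwa [show j + b + a = j + (a + b) by omega] at this

lemma Nf_eq_zero {f : E β k} (hf : f ∈ Nf k (k + 1)) : f = 0 := by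
  apply LinearMap.ext; intro v
  have : f v ∈ Mfil k (0 + (k + 1)) := hf 0 v (mem_Mfil_zero k v)
  rw [zero_add] at this
  simpa using eq_zero_of_mem_Mfil k (f v) this

lemma Nf_pow {f : E β k} (hf : f ∈ Nf k 1) : ∀ i, f ^ (i + 1) ∈ Nf k (i + 1) := by
  intro i
  induction i with
  | zero => simpa using hf
  | succ i ih =>
    have := Nf_mul k ih hf
    rwa [← pow_succ] at this


/-- Prepend `x`, but kill lists that already start with `x` or are too long. -/
def SxF (x : β) (l : Idx β k) : ℤ →ₗ[ℤ] M β k :=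
  if h : l.1.length < k ∧ l.1.head? ≠ some x then
    Finsupp.lsingle ⟨x :: l.1, by simpa [List.length_cons] using h.1⟩
  else 0

def Sx (x : β) : E β k := Finsupp.lsum ℤ (SxF k x)

lemma Sx_single (x : β) (l : Idx β k) (c : ℤ) :
    Sx k x (Finsupp.single l c) =
      if h : l.1.length < k ∧ l.1.head? ≠ some x then
        Finsupp.single (⟨x :: l.1, by simpa [List.length_cons] using h.1⟩ : Idx β k) c
      else 0 := by
  rw [Sx, Finsupp.lsum_single, SxF]
  split_ifs with h
  · simp [Finsupp.lsingle_apply]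
  · simp

lemma Sx_apply_ne_zero {x : β} {v : M β k} {l : Idx β k} (h : Sx k x v l ≠ 0) :
    ∃ a : Idx β k, l.1 = x :: a.1 ∧ a.1.head? ≠ some x ∧ v a ≠ 0 := by
  rw [Sx, Finsupp.lsum_apply, Finsupp.sum_apply] at h
  obtain ⟨a, ha, hne⟩ := Finset.exists_ne_zero_of_sum_ne_zero h
  simp only [SxF] at hne
  split_ifs at hne with hc
  · rw [Finsupp.lsingle_apply, Finsupp.single_apply] at hne
    split_ifs at hne with he
    · exact ⟨a, by rw [← he], hc.2, Finsupp.mem_support_iff.mp ha⟩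
    · simp at hne
  · simp at hne

lemma Sx_apply_cons (x : β) (v : M β k) (a : Idx β k) (h1 : (x :: a.1).length ≤ k)
    (h2 : a.1.head? ≠ some x) :
    Sx k x v ⟨x :: a.1, h1⟩ = v a := by
  induction v using Finsupp.induction_linear with
  | zero => simp
  | add f g hf hg => rw [map_add, Finsupp.add_apply, hf, hg, Finsupp.add_apply]
  | single b c =>
    rw [Sx_single]
    split_ifs with hc
    · rw [Finsupp.single_apply, Finsupp.single_apply]
      have : ((⟨x :: b.1, by simpa [List.length_cons] using hc.1⟩ : Idx β k)
          = ⟨x :: a.1, h1⟩) ↔ b = a := by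
        constructor
        · intro h; apply Subtype.ext
          have := congrArg Subtype.val h
          simpa using this
        · intro h; subst h; rfl
      by_cases hba : b = a
      · subst hba; rw [if_pos rfl, if_pos rfl]
      · rw [if_neg (fun h => hba (this.mp h)), if_neg hba]
    · rw [Finsupp.coe_zero, Pi.zero_apply, Finsupp.single_apply]
      rw [if_neg]
      intro hba
      apply hc
      subst hba
      exact ⟨by simpa [List.length_cons] using h1, h2⟩

lemma Sx_sq (x : β) : Sx k x * Sx k x = 0 := by
  apply LinearMap.ext; intro v
  apply Finsupp.ext; intro l
  rw [Module.End.mul_apply]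
  by_contra h
  obtain ⟨a, hl, hha, hva⟩ := Sx_apply_ne_zero k h
  obtain ⟨b, hab, _, _⟩ := Sx_apply_ne_zero k hva
  exact hha (by rw [hab]; rfl)

lemma Sx_mem_Nf1 (x : β) : Sx k x ∈ Nf k 1 := by
  intro j v hv l hl
  by_contra h
  obtain ⟨a, hl', _, hva⟩ := Sx_apply_ne_zero k h
  exact hva (hv a (by have := congrArg List.length hl'; simp at this; omega))

/-- The unipotent unit `1 + Sx`. -/
def ux (x : β) : (E β k)ˣ where
  val := 1 + Sx k x
  inv := 1 - Sx k x
  val_inv := by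
    have h := Sx_sq k x
    rw [add_mul, one_mul, mul_sub, mul_one, h]
    abel
  inv_val := by
    have h := Sx_sq k x
    rw [sub_mul, one_mul, mul_add, mul_one, h]
    abel

lemma ux_val (x : β) : ((ux k x : (E β k)ˣ) : E β k) = 1 + Sx k x := rfl

lemma ux_inv_val (x : β) : (((ux k x)⁻¹ : (E β k)ˣ) : E β k) = 1 - Sx k x := rfl

lemma ux_zpow (x : β) (e : ℤ) :
    ((ux k x ^ e : (E β k)ˣ) : E β k) = 1 + e • Sx k x := by
  induction e using Int.induction_on with
  | zero => simp
  | succ n ih =>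
    rw [zpow_add_one, Units.val_mul, ih, ux_val]
    rw [add_mul, one_mul, mul_add, mul_one, smul_mul_assoc, Sx_sq, smul_zero]
    push_cast
    rw [add_smul, one_smul]
    abel
  | pred n ih =>
    rw [zpow_sub_one, Units.val_mul, ih, ux_inv_val]
    rw [add_mul, one_mul, mul_sub, mul_one, smul_mul_assoc, Sx_sq, smul_zero]
    push_cast
    rw [sub_smul, one_smul]
    abel


lemma mul_sub_one_mem {c : ℕ} {A B : E β k} (hA : A - 1 ∈ Nf k (c + 1))
    (hB : B - 1 ∈ Nf k (c + 1)) : A * B - 1 ∈ Nf k (c + 1) := by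
  have key : A * B - 1 = (A - 1) * (B - 1) + (A - 1) + (B - 1) := by noncomm_ring
  rw [key]
  exact Submodule.add_mem _ (Submodule.add_mem _
    (Nf_anti k (by omega) (Nf_mul k hA hB)) hA) hB

lemma inv_sub_one_mem {c : ℕ} (g : (E β k)ˣ) (hg : ((g : E β k) - 1) ∈ Nf k (c + 1)) :
    (((g⁻¹ : (E β k)ˣ) : E β k) - 1) ∈ Nf k (c + 1) := by
  set n : E β k := (g : E β k) - 1 with hn
  have hn1 : n ∈ Nf k 1 := Nf_anti k (by omega) hg
  have hnpow : ∀ i : ℕ, (-n) ^ (i + 1) ∈ Nf k (c + 1) := by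
    intro i
    induction i with
    | zero => simpa using Submodule.neg_mem _ hg
    | succ i ih =>
      rw [pow_succ]
      exact Nf_anti k (by omega) (Nf_mul k ih (Submodule.neg_mem _ hn1))
  have htop : (-n) ^ (k + 1) = 0 := by
    apply Nf_eq_zero
    have := Nf_pow k (Submodule.neg_mem _ hn1) k
    exact this
  have hinv : ((g⁻¹ : (E β k)ˣ) : E β k) = ∑ i ∈ Finset.range (k + 1), (-n) ^ i := by
    apply Units.inv_eq_of_mul_eq_one_left
    have hgval : (g : E β k) = 1 + n := by rw [hn]; abel
    rw [hgval, Finset.sum_mul]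
    have hterm : ∀ i ∈ Finset.range (k + 1),
        (-n) ^ i * (1 + n) = (-n) ^ i - (-n) ^ (i + 1) := by
      intro i _
      rw [mul_add, mul_one, pow_succ, mul_neg]
      abel
    rw [Finset.sum_congr rfl hterm, Finset.sum_range_sub', htop, pow_zero, sub_zero]
  rw [hinv, Finset.sum_range_succ']
  simp only [pow_zero]
  rw [add_sub_cancel_right]
  exact Submodule.sum_mem _ (fun i _ => hnpow i)

/-- The filtration subgroups of the unit group. -/
def Vgrp (a : ℕ) : Subgroup (E β k)ˣ where
  carrier := {g | ((g : E β k) - 1) ∈ Nf k (a + 1)}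
  one_mem' := by simp
  mul_mem' := fun {g h} hg hh => by
    rw [Set.mem_setOf_eq, Units.val_mul]
    exact mul_sub_one_mem k hg hh
  inv_mem' := fun {g} hg => inv_sub_one_mem k g hg

lemma Vgrp_anti {a b : ℕ} (h : a ≤ b) : Vgrp (β := β) k b ≤ Vgrp k a :=
  fun g hg => Nf_anti k (by omega) hg

lemma commutator_mem_Vgrp {a b : ℕ} {g h : (E β k)ˣ} (hg : g ∈ Vgrp k a)
    (hh : h ∈ Vgrp k b) : ⁅g, h⁆ ∈ Vgrp k (a + b + 1) := by
  set A : E β k := (g : E β k)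
  set B : E β k := (h : E β k)
  set A' : E β k := ((g⁻¹ : (E β k)ˣ) : E β k)
  set B' : E β k := ((h⁻¹ : (E β k)ˣ) : E β k)
  have hAA' : A * A' = 1 := by rw [← Units.val_mul, mul_inv_cancel, Units.val_one]
  have hBB' : B * B' = 1 := by rw [← Units.val_mul, mul_inv_cancel, Units.val_one]
  set n : E β k := A - 1
  set m : E β k := B - 1
  have hn : n ∈ Nf k (a + 1) := hg
  have hm : m ∈ Nf k (b + 1) := hh
  have hA'1 : A' - 1 ∈ Nf k 1 := by
    have := inv_sub_one_mem k g hg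
    exact Nf_anti k (by omega) this
  have hB'1 : B' - 1 ∈ Nf k 1 := by
    have := inv_sub_one_mem k h hh
    exact Nf_anti k (by omega) this
  have he : A' * B' - 1 ∈ Nf k 1 := by
    have := mul_sub_one_mem (c := 0) k hA'1 hB'1
    exact this
  show (((⁅g, h⁆ : (E β k)ˣ) : E β k) - 1) ∈ Nf k (a + b + 1 + 1)
  have hval : ((⁅g, h⁆ : (E β k)ˣ) : E β k) = A * B * A' * B' := by
    rw [commutatorElement_def, Units.val_mul, Units.val_mul, Units.val_mul]
  have h1 : A * B * A' * B' - 1 = (A * B - B * A) * (A' * B') := by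
    have hone : B * A * (A' * B') = 1 := by
      calc B * A * (A' * B') = B * (A * A') * B' := by noncomm_ring
        _ = 1 := by rw [hAA', mul_one, hBB']
    rw [sub_mul, hone]
    noncomm_ring
  have h2 : A * B - B * A = n * m - m * n := by
    have hA : A = 1 + n := by simp [n]
    have hB : B = 1 + m := by simp [m]
    rw [hA, hB]; noncomm_ring
  have h3 : n * m - m * n ∈ Nf k (a + b + 2) := by
    apply Submodule.sub_mem
    · have := Nf_mul k hn hm
      rwa [show a + 1 + (b + 1) = a + b + 2 by omega] at this
    · have := Nf_mul k hm hn
      rwa [show b + 1 + (a + 1) = a + b + 2 by omega] at this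
  have h4 : (n * m - m * n) * (A' * B') ∈ Nf k (a + b + 2) := by
    have hAB' : A' * B' = 1 + (A' * B' - 1) := by abel
    rw [hAB', mul_add, mul_one]
    apply Submodule.add_mem _ h3
    exact Nf_anti k (by omega) (Nf_mul k h3 he)
  rw [hval, h1, h2]
  rwa [show a + b + 1 + 1 = a + b + 2 by omega]


lemma Vgrp_eq_one {c : ℕ} (hc : k ≤ c) {g : (E β k)ˣ} (hg : g ∈ Vgrp k c) : g = 1 := by
  have h0 : ((g : E β k) - 1) ∈ Nf k (k + 1) := Nf_anti k (by omega) hg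
  have := Nf_eq_zero k h0
  apply Units.ext
  rw [Units.val_one]
  have : (g : E β k) = 1 := by
    have h2 : (g : E β k) - 1 = 0 := this
    linear_combination (norm := abel) h2
  exact this

/-- The Magnus homomorphism. -/
def phi : FreeGroup β →* (E β k)ˣ := FreeGroup.lift (fun x => ux k x)

lemma phi_range_le : (phi (β := β) k).range ≤ Vgrp k 0 := by
  apply FreeGroup.range_lift_le
  rintro g ⟨x, rfl⟩
  show ((ux k x : E β k) - 1) ∈ Nf k 1
  rw [ux_val, add_sub_cancel_left]
  exact Sx_mem_Nf1 k x

lemma map_derivedSeries_le_Vgrp (n : ℕ) :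
    Subgroup.map (phi (β := β) k) (derivedSeries (FreeGroup β) n) ≤ Vgrp k (2 ^ n - 1) := by
  induction n with
  | zero =>
    rw [derivedSeries_zero, ← MonoidHom.range_eq_map]
    simpa using phi_range_le k
  | succ n ih =>
    rw [derivedSeries_succ, Subgroup.map_commutator]
    have h1 : ⁅Subgroup.map (phi (β := β) k) (derivedSeries (FreeGroup β) n),
        Subgroup.map (phi (β := β) k) (derivedSeries (FreeGroup β) n)⁆ ≤
        ⁅Vgrp (β := β) k (2 ^ n - 1), Vgrp k (2 ^ n - 1)⁆ :=
      Subgroup.commutator_mono ih ih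
    refine h1.trans ?_
    rw [Subgroup.commutator_le]
    intro g hg h hh
    have := commutator_mem_Vgrp k hg hh
    have h2 : 1 ≤ 2 ^ n := Nat.one_le_two_pow
    rwa [show 2 ^ n - 1 + (2 ^ n - 1) + 1 = 2 ^ (n + 1) - 1 by
      rw [pow_succ]; omega] at this

/-! ### Syllables -/

/-- Sign of a boolean letter. -/
def eps (b : Bool) : ℤ := bif b then 1 else -1

lemma eps_ne_zero (b : Bool) : eps b ≠ 0 := by cases b <;> simp [eps]

/-- Collapse a word into syllables. -/
def syll : List (β × Bool) → List (β × ℤ)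
  | [] => []
  | (x, b) :: L =>
    match syll L with
    | [] => [(x, eps b)]
    | (y, e) :: s => if x = y then (x, e + eps b) :: s else (x, eps b) :: (y, e) :: s

lemma syll_nil : syll (β := β) [] = [] := rfl

lemma syll_cons_nil {x : β} {b : Bool} {L : List (β × Bool)} (h : syll L = []) :
    syll ((x, b) :: L) = [(x, eps b)] := by
  rw [syll, h]

lemma syll_cons_cons {x y : β} {b : Bool} {e : ℤ} {L : List (β × Bool)}
    {s : List (β × ℤ)} (h : syll L = (y, e) :: s) :
    syll ((x, b) :: L) = if x = y then (x, e + eps b) :: s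
      else (x, eps b) :: (y, e) :: s := by
  rw [syll, h]

lemma syll_length (L : List (β × Bool)) : (syll L).length ≤ L.length := by
  induction L with
  | nil => simp [syll]
  | cons p L ih =>
    obtain ⟨x, b⟩ := p
    cases h : syll L with
    | nil => simp [syll_cons_nil h]
    | cons q s =>
      obtain ⟨y, e⟩ := q
      rw [h] at ih
      rw [syll_cons_cons h]
      split_ifs <;> simp_all <;> omega

lemma zpow_eps {H : Type*} [Group H] (u : H) (b : Bool) :
    u ^ eps b = cond b u u⁻¹ := by cases b <;> simp [eps]

lemma syll_prod {H : Type*} [Group H] (f : β → H) (L : List (β × Bool)) :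
    ((syll L).map (fun p => f p.1 ^ p.2)).prod
      = (L.map fun p => cond p.2 (f p.1) (f p.1)⁻¹).prod := by
  induction L with
  | nil => simp [syll]
  | cons p L ih =>
    obtain ⟨x, b⟩ := p
    rw [List.map_cons, List.prod_cons, ← ih, ← zpow_eps (f x) b]
    cases h : syll L with
    | nil => simp [syll_cons_nil h, h]
    | cons q s =>
      obtain ⟨y, e⟩ := q
      rw [syll_cons_cons h]
      split_ifs with hxy
      · subst hxy
        simp only [List.map_cons, List.prod_cons]
        rw [← mul_assoc, ← zpow_add, add_comm]
      · simp only [List.map_cons, List.prod_cons]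

/-- Reducedness as a chain condition. -/
def Red' (L : List (β × Bool)) : Prop :=
  List.Chain' (fun p q : β × Bool => p.1 = q.1 → p.2 = q.2) L

lemma red'_of_noCancel :
    ∀ L : List (β × Bool),
      (∀ (L₁ : List (β × Bool)) (x : β) (b : Bool) (L₂ : List (β × Bool)),
        L ≠ L₁ ++ (x, b) :: (x, !b) :: L₂) → Red' L := by
  intro L
  induction L with
  | nil => intro _; exact List.isChain_nil
  | cons p L ih =>
    intro hno
    cases L with
    | nil => exact List.isChain_singleton p
    | cons q L' =>
      rw [Red', List.Chain', List.isChain_cons_cons]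
      constructor
      · intro hxy
        by_contra hbc
        have hq : q = (p.1, !p.2) := by
          obtain ⟨y, c⟩ := q
          obtain ⟨x, b⟩ := p
          simp_all
          cases b <;> cases c <;> simp_all
        exact hno [] p.1 p.2 L' (by
          rw [hq]
          simp)
      · exact ih (fun L₁ x b L₂ h => hno (p :: L₁) x b L₂ (by rw [h]; rfl))

lemma red'_toWord (w : FreeGroup β) : Red' w.toWord := by
  apply red'_of_noCancel
  intro L₁ x b L₂ h
  exact FreeGroup.reduce.not (L₁ := w.toWord) (by rw [FreeGroup.reduce_toWord, h])

/-- Syllable structure of reduced words. -/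
lemma syll_good : ∀ L : List (β × Bool), Red' L →
    (List.Chain' (fun p q : β × ℤ => p.1 ≠ q.1) (syll L) ∧ ∀ p ∈ syll L, p.2 ≠ 0)
    ∧ (∀ (x : β) (b : Bool) (L' : List (β × Bool)), L = (x, b) :: L' →
        ∃ (e : ℤ) (s : List (β × ℤ)), syll L = (x, e) :: s
          ∧ (bif b then 0 < e else e < 0)) := by
  intro L
  induction L with
  | nil =>
    intro _
    exact ⟨⟨List.isChain_nil, by simp [syll]⟩, fun x b L' h => by simp at h⟩
  | cons p L ih =>
    intro hred
    obtain ⟨x, b⟩ := p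
    have hredL : Red' L := List.IsChain.tail hred
    obtain ⟨⟨ihchain, ihexp⟩, ihhead⟩ := ih hredL
    cases hL : L with
    | nil =>
      subst hL
      refine ⟨⟨?_, ?_⟩, ?_⟩
      · simp [syll_cons_nil syll_nil, List.Chain']
      · intro p hp
        simp [syll] at hp
        subst hp
        exact eps_ne_zero b
      · intro x' b' L'' h
        rw [List.cons.injEq, Prod.mk.injEq] at h
        obtain ⟨⟨rfl, rfl⟩, rfl⟩ := h
        refine ⟨eps b, [], syll_cons_nil syll_nil, ?_⟩
        cases b <;> simp [eps]
    | cons q L' =>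
      obtain ⟨y, c⟩ := q
      subst hL
      have hrel : x = y → b = c := (List.isChain_cons_cons.mp hred).1
      obtain ⟨e, s, hsyll, hsign⟩ := ihhead y c L' rfl
      have key : syll ((x, b) :: (y, c) :: L')
          = if x = y then (x, e + eps b) :: s else (x, eps b) :: (y, e) :: s :=
        syll_cons_cons hsyll
      by_cases hxy : x = y
      · have hbc : b = c := hrel hxy
        subst hxy; subst hbc
        have hsign' : bif b then 0 < e + eps b else e + eps b < 0 := by
          cases b <;> simp [eps] at hsign ⊢ <;> omega
        rw [if_pos rfl] at key
        refine ⟨⟨?_, ?_⟩, ?_⟩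
        · rw [key]
          rw [hsyll] at ihchain
          cases s with
          | nil => simp [List.Chain']
          | cons r s' =>
            rw [List.Chain', List.isChain_cons_cons] at ihchain ⊢
            exact ⟨ihchain.1, ihchain.2⟩
        · intro p hp
          rw [key] at hp
          rcases List.mem_cons.mp hp with h | h
          · rw [h]
            cases b <;> simp at hsign' <;> omega
          · exact ihexp p (by rw [hsyll]; exact List.mem_cons_of_mem _ h)
        · intro x' b' L'' h
          rw [List.cons.injEq, Prod.mk.injEq] at h
          obtain ⟨⟨rfl, rfl⟩, rfl⟩ := h
          exact ⟨e + eps b, s, key, hsign'⟩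
      · rw [if_neg hxy] at key
        refine ⟨⟨?_, ?_⟩, ?_⟩
        · rw [key, List.Chain', List.isChain_cons_cons]
          exact ⟨hxy, by rw [← hsyll]; exact ihchain⟩
        · intro p hp
          rw [key] at hp
          rcases List.mem_cons.mp hp with h | h
          · rw [h]; exact eps_ne_zero b
          · exact ihexp p (by rw [hsyll]; exact h)
        · intro x' b' L'' h
          rw [List.cons.injEq, Prod.mk.injEq] at h
          obtain ⟨⟨rfl, rfl⟩, rfl⟩ := h
          refine ⟨eps b, (y, e) :: s, key, ?_⟩
          cases b <;> simp [eps]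


/-- The basis vector at the empty word. -/
def delta : M β k := Finsupp.single ⟨[], by simp⟩ 1

lemma magnus_eval : ∀ (s : List (β × ℤ)),
    List.Chain' (fun p q : β × ℤ => p.1 ≠ q.1) s → (∀ p ∈ s, p.2 ≠ 0) → s.length ≤ k →
    (∀ l : Idx β k,
        ((((s.map fun p => ux k p.1 ^ p.2).prod : (E β k)ˣ) : E β k) (delta k)) l ≠ 0 →
        l.1.length ≤ s.length)
    ∧ ∀ (hl : (s.map Prod.fst).length ≤ k),
        ((((s.map fun p => ux k p.1 ^ p.2).prod : (E β k)ˣ) : E β k) (delta k))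
          ⟨s.map Prod.fst, hl⟩ = (s.map Prod.snd).prod := by
  intro s
  induction s with
  | nil =>
    intro _ _ _
    constructor
    · intro l h
      simp only [List.map_nil, List.prod_nil, Units.val_one, Module.End.one_apply] at h
      by_contra hlen
      apply h
      rw [delta, Finsupp.single_apply, if_neg]
      intro he
      have : l.1 = [] := by rw [← he]
      simp [this] at hlen
    · intro hl
      simp only [List.map_nil, List.prod_nil, Units.val_one, Module.End.one_apply]
      rw [delta, Finsupp.single_apply, if_pos (Subtype.ext rfl)]
  | cons p s' ih =>
    intro hchain hexp hlen
    obtain ⟨x, e⟩ := p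
    have hchain' : List.Chain' (fun p q : β × ℤ => p.1 ≠ q.1) s' := hchain.tail
    have hexp' : ∀ p ∈ s', p.2 ≠ 0 := fun p hp => hexp p (List.mem_cons_of_mem _ hp)
    have hlen' : s'.length ≤ k := by simp at hlen; omega
    obtain ⟨ihB, ihA⟩ := ih hchain' hexp' hlen'
    set u : (E β k)ˣ := (s'.map fun p => ux k p.1 ^ p.2).prod with hu
    set vrest : M β k := (u : E β k) (delta k) with hv
    have hprod : (((((x, e) :: s').map fun p => ux k p.1 ^ p.2).prod : (E β k)ˣ) : E β k)
        (delta k) = vrest + e • (Sx k x vrest) := by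
      rw [List.map_cons, List.prod_cons, Units.val_mul, Module.End.mul_apply, ← hv,
        ux_zpow, LinearMap.add_apply, Module.End.one_apply, LinearMap.smul_apply]
    constructor
    · intro l h
      rw [hprod, Finsupp.add_apply, Finsupp.smul_apply] at h
      by_cases h1 : vrest l = 0
      · have h2 : (Sx k x vrest) l ≠ 0 := by
          intro h3
          rw [h1, h3, smul_zero, add_zero] at h
          exact h rfl
        obtain ⟨a, hla, _, hva⟩ := Sx_apply_ne_zero k h2
        have := ihB a hva
        have hll : l.1.length = a.1.length + 1 := by rw [hla]; simp
        simp only [List.length_cons]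
        omega
      · have := ihB l h1
        simp only [List.length_cons]
        omega
    · intro hl
      have hl' : (x :: s'.map Prod.fst).length ≤ k := by simpa using hl
      have ht : (⟨((x, e) :: s').map Prod.fst, hl⟩ : Idx β k)
          = ⟨x :: s'.map Prod.fst, hl'⟩ := by
        apply Subtype.ext; simp
      rw [hprod, ht, Finsupp.add_apply, Finsupp.smul_apply]
      have hterm1 : vrest ⟨x :: s'.map Prod.fst, hl'⟩ = 0 := by
        by_contra h1
        have := ihB _ h1
        simp at this
      have hhead : (s'.map Prod.fst).head? ≠ some x := by
        cases s' with
        | nil => simp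
        | cons q s'' =>
          have hrel : (x, e).1 ≠ q.1 := (List.isChain_cons_cons.mp hchain).1
          simp only [List.map_cons, List.head?_cons, ne_eq, Option.some.injEq]
          exact fun h => hrel (by rw [h])
      have hml : (s'.map Prod.fst).length ≤ k := by simp at hl' ⊢; omega
      have hterm2 : (Sx k x vrest) ⟨x :: s'.map Prod.fst, hl'⟩
          = (s'.map Prod.snd).prod := by
        have := Sx_apply_cons k x vrest ⟨s'.map Prod.fst, hml⟩ (by simpa using hl') hhead
        rw [this, ihA hml]
      rw [hterm1, hterm2, zero_add, List.map_cons, List.prod_cons, smul_eq_mul]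

lemma map_fst_injective_aux : True := trivial

lemma magnus_ne_one (w : FreeGroup β) (hw : w ≠ 1) :
    phi (w.toWord.length) w ≠ 1 := by
  set L : List (β × Bool) := w.toWord with hL
  set k' : ℕ := L.length
  set s : List (β × ℤ) := syll L with hs
  have hred : Red' L := red'_toWord w
  obtain ⟨⟨hchain, hexp⟩, hhead⟩ := syll_good L hred
  have hLne : L ≠ [] := fun h => hw (FreeGroup.toWord_eq_nil_iff.mp (hL ▸ h))
  have hsne : s ≠ [] := by
    cases hLc : L with
    | nil => exact absurd hLc hLne
    | cons p L' =>
      obtain ⟨e0, s0, hsyll, _⟩ := hhead p.1 p.2 L' (by rw [hLc])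
      rw [hs, hsyll]
      simp
  have hslen : s.length ≤ k' := syll_length L
  have hval : phi k' w = (s.map fun p => ux k' p.1 ^ p.2).prod := by
    rw [hs, syll_prod (fun x => ux k' x) L]
    conv_lhs => rw [phi, ← FreeGroup.mk_toWord (x := w)]
    exact FreeGroup.lift_mk
  intro hone
  have hml : (s.map Prod.fst).length ≤ k' := by simpa using hslen
  have heval := (magnus_eval k' s hchain hexp hslen).2 hml
  rw [← hval, hone] at heval
  have hzero : ((1 : (E β k')ˣ) : E β k') (delta k') ⟨s.map Prod.fst, hml⟩ = 0 := by
    rw [Units.val_one, Module.End.one_apply, delta, Finsupp.single_apply, if_neg]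
    intro h
    have : ([] : List β) = s.map Prod.fst := congrArg Subtype.val h
    exact hsne (by simpa using this.symm)
  rw [hzero] at heval
  have hnz : (0 : ℤ) ∉ s.map Prod.snd := by
    intro h0
    obtain ⟨p, hp, hps⟩ := List.mem_map.mp h0
    exact hexp p hp hps
  exact List.prod_ne_zero hnz heval.symm

end MagnusRS

open MagnusRS in
lemma freeGroup_iInf_derivedSeries (β : Type*) :
    (⨅ n : ℕ, derivedSeries (FreeGroup β) n) = ⊥ := by
  classical
  rw [eq_bot_iff]
  intro w hw
  rw [Subgroup.mem_iInf] at hw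
  rw [Subgroup.mem_bot]
  by_contra hne
  set k := w.toWord.length with hk
  have h1 : phi k w ∈ Subgroup.map (phi (β := β) k) (derivedSeries (FreeGroup β) k) :=
    ⟨w, hw k, rfl⟩
  have h2 : phi k w ∈ Vgrp k (2 ^ k - 1) := map_derivedSeries_le_Vgrp k k h1
  have h3 : phi k w = 1 := by
    apply Vgrp_eq_one k _ h2
    have := Nat.lt_two_pow_self (n := k)
    omega
  exact magnus_ne_one w hne h3

lemma subgroup_iInf_derivedSeries_eq_bot {G : Type*} [Group G] (K : Subgroup G)
    [IsFreeGroup K] : (⨅ n : ℕ, derivedSeries K n) = ⊥ := by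
  rw [eq_bot_iff]
  intro y hy
  rw [Subgroup.mem_iInf] at hy
  rw [Subgroup.mem_bot]
  set e : K ≃* FreeGroup (IsFreeGroup.Generators K) := IsFreeGroup.toFreeGroup K
  have h1 : ∀ n, e y ∈ derivedSeries (FreeGroup (IsFreeGroup.Generators K)) n := by
    intro n
    exact map_derivedSeries_le_derivedSeries e.toMonoidHom n ⟨y, hy n, rfl⟩
  have h2 : e y ∈ (⨅ n : ℕ, derivedSeries (FreeGroup (IsFreeGroup.Generators K)) n) :=
    Subgroup.mem_iInf.mpr h1
  rw [freeGroup_iInf_derivedSeries, Subgroup.mem_bot] at h2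
  have : e y = e 1 := by rw [map_one]; exact h2
  exact e.injective this

end

/-- An extension of a free group by a nilpotent group is residually
solvable: if `K ⊴ G` with `K` free and `G/K` nilpotent, then `G` is residually
solvable. -/
theorem residuallySolvable_of_free_by_nilpotent
    {G : Type*} [Group G] (K : Subgroup G) [K.Normal] [IsFreeGroup K]
    (hQ : Group.IsNilpotent (G ⧸ K)) :
    ResiduallySolvable G := by
  have hsolv : Group.IsSolvable (G ⧸ K) := inferInstance
  obtain ⟨d, hd⟩ := hsolv.solvable
  have hdK : derivedSeries G d ≤ K := by
    intro x hx
    have h1 : (QuotientGroup.mk' K) x ∈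
        Subgroup.map (QuotientGroup.mk' K) (derivedSeries G d) := ⟨x, hx, rfl⟩
    have h2 := map_derivedSeries_le_derivedSeries (QuotientGroup.mk' K) d h1
    rw [hd, Subgroup.mem_bot] at h2
    rwa [← QuotientGroup.ker_mk' K, MonoidHom.mem_ker]
  have hstep : ∀ n : ℕ, derivedSeries G (n + d) ≤
      Subgroup.map K.subtype (derivedSeries K n) := by
    intro n
    induction n with
    | zero =>
      rw [zero_add, derivedSeries_zero]
      intro x hx
      exact ⟨⟨x, hdK hx⟩, Subgroup.mem_top _, rfl⟩
    | succ n ih =>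
      rw [show n + 1 + d = (n + d) + 1 by omega, derivedSeries_succ, derivedSeries_succ]
      exact Subgroup.commutator_le_map_commutator ih ih
  rw [ResiduallySolvable, eq_bot_iff]
  intro x hx
  rw [Subgroup.mem_iInf] at hx
  rw [Subgroup.mem_bot]
  have hxK : x ∈ K := hdK (hx d)
  set y : K := ⟨x, hxK⟩ with hy
  have hyn : ∀ n, y ∈ derivedSeries K n := by
    intro n
    obtain ⟨y', hy', hyx⟩ := hstep n (hx (n + d))
    have : y' = y := by
      apply Subtype.ext
      exact hyx
    rwa [← this]
  have : y ∈ (⨅ n : ℕ, derivedSeries K n) := Subgroup.mem_iInf.mpr hyn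
  rw [subgroup_iInf_derivedSeries_eq_bot, Subgroup.mem_bot] at this
  simpa [hy] using congrArg Subtype.val this
end
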